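/- arXiv:2510.01291 — 4 statements merged into one kernel-verified Lean document; each statement's English description precedes it below -/
import Mathlib

section
/- Suppose A is (1,δ)-differentially private, the datasets sizes satisfy |T| ≥ εn and |W| ≤ n−εn (so |W|/|T| ≤ (1−ε)/ε), and V, W are held fixed (public). Then the algorithm Aux(U,V,W) is (2+2·ln 2, 4e·δ)-differentially private with respect to U: for any neighboring U₁,U₂ and any measurable output set O, Pr[Aux(U₁,V,W)∈O] ≤ e^{2+2 ln 2}·Pr[Aux(U₂,V,W)∈O] + 4e·δ. -/
open MeasureTheory
open scoped ENNReal

/-- Two datasets (tuples) are neighboring if they differ in exactly one entry. -/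
def Neighboring {Z : Type*} {n : ℕ} (S₁ S₂ : Fin n → Z) : Prop :=
  ∃ i, S₁ i ≠ S₂ i ∧ ∀ j, j ≠ i → S₁ j = S₂ j

/-- `(ε,δ)`-differential privacy of a randomized algorithm (a kernel into `PMF`s). -/
def IsDP {Z Ω : Type*} {n : ℕ} (A : (Fin n → Z) → PMF Ω) (ε δ : ℝ) : Prop :=
  ∀ S₁ S₂ : Fin n → Z, Neighboring S₁ S₂ → ∀ O : Set Ω,
    (A S₁).toOuterMeasure O ≤ ENNReal.ofReal (Real.exp ε) * (A S₂).toOuterMeasure O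
      + ENNReal.ofReal δ

/-- Generalization error of a hypothesis w.r.t. a distribution over `X × Bool`. -/
noncomputable def errD {X : Type*} [MeasurableSpace X] (D : Measure (X × Bool))
    (h : X → Bool) : ℝ :=
  (D {p | h p.1 ≠ p.2}).toReal

/-- Empirical error of a hypothesis on a labeled dataset. -/
noncomputable def errS {X : Type*} {n : ℕ} (S : Fin n → X × Bool) (h : X → Bool) : ℝ :=
  (Finset.univ.filter fun i => h (S i).1 ≠ (S i).2).card / n

/-- Empirical disagreement between two hypotheses on an unlabeled dataset. -/
noncomputable def disS {X : Type*} {n : ℕ} (Sx : Fin n → X) (h₁ h₂ : X → Bool) : ℝ :=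
  (Finset.univ.filter fun i => h₁ (Sx i) ≠ h₂ (Sx i)).card / n

/-- Generalization disagreement between two hypotheses w.r.t. a marginal distribution. -/
noncomputable def disD {X : Type*} [MeasurableSpace X] (DX : Measure X)
    (h₁ h₂ : X → Bool) : ℝ :=
  (DX {x | h₁ x ≠ h₂ x}).toReal

/-- The VC dimension of a concept class: the largest `d` such that some `d` distinct
points are shattered by `C`. -/
noncomputable def vcDim {X : Type*} (C : Set (X → Bool)) : ℕ :=
  sSup {d : ℕ | ∃ f : Fin d → X, Function.Injective f ∧
    ∀ g : Fin d → Bool, ∃ c ∈ C, ∀ i, c (f i) = g i}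

/-- The optimal (infimum) generalization error over the concept class. -/
noncomputable def optErr {X : Type*} [MeasurableSpace X] (C : Set (X → Bool))
    (D : Measure (X × Bool)) : ℝ :=
  ⨅ c : C, errD D (c : X → Bool)

/-- `(α,β)`-PAC learner (realizable setting) with sample complexity `m`. -/
def IsPACLearner {X : Type*} [MeasurableSpace X] (C : Set (X → Bool)) (α β : ℝ) {m : ℕ}
    (A : (Fin m → X × Bool) → PMF (X → Bool)) : Prop :=
  ∀ D : Measure (X × Bool), IsProbabilityMeasure D → (∃ c ∈ C, errD D c = 0) →
    ENNReal.ofReal (1 - β) ≤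
      ∫⁻ S, (A S).toOuterMeasure {h | errD D h ≤ α} ∂(Measure.pi fun _ : Fin m => D)

/-- `(α,β)`-agnostic learner with sample complexity `n`. -/
def IsAgnosticLearner {X : Type*} [MeasurableSpace X] (C : Set (X → Bool)) (α β : ℝ) {n : ℕ}
    (A : (Fin n → X × Bool) → PMF (X → Bool)) : Prop :=
  ∀ D : Measure (X × Bool), IsProbabilityMeasure D →
    ENNReal.ofReal (1 - β) ≤
      ∫⁻ S, (A S).toOuterMeasure {h | errD D h ≤ optErr C D + α}
        ∂(Measure.pi fun _ : Fin n => D)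

/-- A learner is proper if it always outputs a hypothesis in `C`. -/
def IsProper {X : Type*} {n : ℕ} (C : Set (X → Bool))
    (A : (Fin n → X × Bool) → PMF (X → Bool)) : Prop :=
  ∀ S, (A S).support ⊆ C

/-- `(α,β)`-PAC empirical learner with sample complexity `m`. -/
def IsEmpiricalLearner {X : Type*} (C : Set (X → Bool)) (α β : ℝ) {m : ℕ}
    (A : (Fin m → X × Bool) → PMF (X → Bool)) : Prop :=
  ∀ c ∈ C, ∀ Sx : Fin m → X,
    ENNReal.ofReal (1 - β) ≤
      (A fun i => (Sx i, c (Sx i))).toOuterMeasure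
        {h | errS (fun i => (Sx i, c (Sx i))) h ≤ α}

/-- The exponential mechanism over a finite nonempty type, with the given exponents:
it outputs `h` with probability proportional to `exp (score h)`. -/
noncomputable def expMech {H : Type*} [Fintype H] [Nonempty H] (score : H → ℝ) : PMF H :=
  ⟨fun h => ENNReal.ofReal (Real.exp (score h)) / ∑ f, ENNReal.ofReal (Real.exp (score f)), by
    have h0 : (∑ f, ENNReal.ofReal (Real.exp (score f))) ≠ 0 := by
      intro hsum
      rw [Finset.sum_eq_zero_iff] at hsum
      obtain ⟨a⟩ := (inferInstance : Nonempty H)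
      have ha := hsum a (Finset.mem_univ a)
      rw [ENNReal.ofReal_eq_zero] at ha
      exact absurd ha (not_le.mpr (Real.exp_pos _))
    have htop : (∑ f, ENNReal.ofReal (Real.exp (score f))) ≠ ⊤ :=
      (ENNReal.sum_lt_top.mpr fun f _ => ENNReal.ofReal_lt_top).ne
    have key : ∑ h, ENNReal.ofReal (Real.exp (score h)) /
        ∑ f, ENNReal.ofReal (Real.exp (score f)) = 1 := by
      simp only [div_eq_mul_inv]
      rw [← Finset.sum_mul]
      exact ENNReal.mul_inv_cancel h0 htop
    have hs := hasSum_fintype (fun h => ENNReal.ofReal (Real.exp (score h)) /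
      ∑ f, ENNReal.ofReal (Real.exp (score f)))
    rwa [key] at hs⟩

/-- The score used by the relabeling procedure: `q(T∘W, h) = inf_{f∈C} (dis_{T_X}(h,f) + err_W(f))`. -/
noncomputable def qScore {X : Type*} (C : Set (X → Bool)) {t w : ℕ}
    (T : Fin t → X × Bool) (W : Fin w → X × Bool) (h : X → Bool) : ℝ :=
  ⨅ f : C, (disS (fun i => (T i).1) h (f : X → Bool) + errS W (f : X → Bool))

/-- The hypothesis-selection step of the relabeling procedure `Rel`:
the candidate set contains, for each labeling of `T_X` realized by `C`, the concept
`pick g ∈ C` chosen for that labeling; a hypothesis is selected by the exponential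
mechanism with privacy parameter `ε`, score `qScore`, and sensitivity `Δ = 1/|W|`. -/
noncomputable def relPMF {X : Type*} (C : Set (X → Bool)) (hC : C.Nonempty) (ε : ℝ)
    {t w : ℕ} (T : Fin t → X × Bool) (W : Fin w → X × Bool)
    (pick : (Fin t → Bool) → (X → Bool)) : PMF (X → Bool) :=
  letI : Fintype {g : Fin t → Bool // ∃ c ∈ C, ∀ i, c (T i).1 = g i} := Fintype.ofFinite _
  haveI : Nonempty {g : Fin t → Bool // ∃ c ∈ C, ∀ i, c (T i).1 = g i} := by
    obtain ⟨c, hc⟩ := hC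
    exact ⟨⟨fun i => c (T i).1, ⟨c, hc, fun _ => rfl⟩⟩⟩
  (expMech fun ℓ : {g : Fin t → Bool // ∃ c ∈ C, ∀ i, c (T i).1 = g i} =>
      -(ε * qScore C T W (pick ℓ.1) * w) / 2).map fun ℓ => pick ℓ.1

/-- The relabeling procedure `Rel`: select `h` as in `relPMF` and output `T` relabeled by `h`. -/
noncomputable def RelProc {X : Type*} (C : Set (X → Bool)) (hC : C.Nonempty) (ε : ℝ)
    {t w : ℕ} (T : Fin t → X × Bool) (W : Fin w → X × Bool)
    (pick : (Fin t → Bool) → (X → Bool)) : PMF (Fin t → X × Bool) :=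
  (relPMF C hC ε T W pick).map fun h i => ((T i).1, h (T i).1)

/-- The algorithm `Agn`: sample a uniformly random index set `I` of size `k`, split the
input into `T` (indexed by `I`) and `W` (the rest), run `Rel` with parameter `ε` on
`(T, W)` to obtain the relabeled dataset `T^h`, and output `A(T^h)`. -/
noncomputable def Agn {X Ω : Type*} (C : Set (X → Bool)) (hC : C.Nonempty) (ε : ℝ)
    {n k : ℕ} (hk : k ≤ n)
    (A : (Fin k → X × Bool) → PMF Ω)
    (pick : (Fin k → X) → (Fin k → Bool) → (X → Bool))
    (S : Fin n → X × Bool) : PMF Ω :=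
  haveI : Nonempty {I : Finset (Fin n) // I.card = k} := by
    obtain ⟨t, -, ht⟩ := Finset.exists_subset_card_eq
      (show k ≤ (Finset.univ : Finset (Fin n)).card by simpa using hk)
    exact ⟨⟨t, ht⟩⟩
  (PMF.uniformOfFintype {I : Finset (Fin n) // I.card = k}).bind fun I =>
    (RelProc C hC ε (fun j => S (I.1.orderIsoOfFin I.2 j).1)
        (fun j => S ((I.1ᶜ.orderIsoOfFin
          (show I.1ᶜ.card = n - k by simp [Finset.card_compl, I.2]) j)).1)
        (pick fun j => (S (I.1.orderIsoOfFin I.2 j).1).1)).bind fun Th =>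
      A Th

/-- The auxiliary algorithm `Aux`: run `Rel` on `T = U ∘ V` and `W` to obtain `T^h`,
select `h̄ = hbar V^h ∈ C` consistent with `V^h`, and output `A(T^h) ⊕ h̄`. -/
noncomputable def Aux {X : Type*} (C : Set (X → Bool)) (hC : C.Nonempty) (ε : ℝ)
    {u v w : ℕ} (U : Fin u → X × Bool) (V : Fin v → X × Bool) (W : Fin w → X × Bool)
    (pick : (Fin (u + v) → X) → (Fin (u + v) → Bool) → (X → Bool))
    (hbar : (Fin v → X × Bool) → (X → Bool))
    (A : (Fin (u + v) → X × Bool) → PMF (X → Bool)) : PMF (X → Bool) :=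
  (relPMF C hC ε (Fin.append U V) W (pick fun i => (Fin.append U V i).1)).bind fun h =>
    (A fun i => ((Fin.append U V i).1, h (Fin.append U V i).1)).map fun g x =>
      xor (g x) (hbar (fun j => ((V j).1, h (V j).1)) x)

/-- Error of a private prediction algorithm: the probability over `(x,y) ~ D` and the
algorithm's coins that the prediction on `x` differs from `y`. -/
noncomputable def errPred {X : Type*} [MeasurableSpace X] (D : Measure (X × Bool)) {n : ℕ}
    (A : (Fin n → X × Bool) → X → PMF Bool) (S : Fin n → X × Bool) : ℝ :=
  (∫⁻ p, (A S p.1).toOuterMeasure {b | b ≠ p.2} ∂D).toReal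

lemma errS_nonneg {X : Type*} {n : ℕ} (S : Fin n → X × Bool) (h : X → Bool) : 0 ≤ errS S h := by
  unfold errS; positivity

lemma disS_nonneg {X : Type*} {n : ℕ} (Sx : Fin n → X) (h₁ h₂ : X → Bool) : 0 ≤ disS Sx h₁ h₂ := by
  unfold disS; positivity

lemma disS_le_of_agree {X : Type*} {t : ℕ}
    (xs₁ xs₂ : Fin t → X) (h₁ h₂ f : X → Bool) (i₀ : Fin t)
    (hag : ∀ j, j ≠ i₀ → xs₁ j = xs₂ j ∧ h₁ (xs₁ j) = h₂ (xs₂ j)) :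
    disS xs₁ h₁ f ≤ disS xs₂ h₂ f + 1 / t := by
  unfold disS
  classical
  have hsub : (Finset.univ.filter fun i => h₁ (xs₁ i) ≠ f (xs₁ i)) ⊆
      insert i₀ (Finset.univ.filter fun i => h₂ (xs₂ i) ≠ f (xs₂ i)) := by
    intro j hj
    rcases eq_or_ne j i₀ with rfl | hji
    · exact Finset.mem_insert_self _ _
    · obtain ⟨hx, hh⟩ := hag j hji
      refine Finset.mem_insert_of_mem ?_
      simp only [Finset.mem_filter, Finset.mem_univ, true_and] at hj ⊢
      rw [← hx] at hh ⊢
      rw [← hh]; exact hj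
  have hcard : ((Finset.univ.filter fun i => h₁ (xs₁ i) ≠ f (xs₁ i)).card : ℝ)
      ≤ ((Finset.univ.filter fun i => h₂ (xs₂ i) ≠ f (xs₂ i)).card : ℝ) + 1 := by
    have := (Finset.card_le_card hsub).trans (Finset.card_insert_le _ _)
    exact_mod_cast this
  rw [← add_div]
  rcases Nat.eq_zero_or_pos t with rfl | ht
  · simp
  · have ht' : (0:ℝ) < t := by exact_mod_cast ht
    gcongr

lemma qScore_le {X : Type*} (C : Set (X → Bool)) (hC : C.Nonempty) {t w : ℕ}
    (T₁ T₂ : Fin t → X × Bool) (W : Fin w → X × Bool) (h₁ h₂ : X → Bool) (i₀ : Fin t)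
    (hag : ∀ j, j ≠ i₀ → (T₁ j).1 = (T₂ j).1 ∧ h₁ (T₁ j).1 = h₂ (T₂ j).1) :
    qScore C T₁ W h₁ ≤ qScore C T₂ W h₂ + 1 / t := by
  haveI : Nonempty C := hC.to_subtype
  have hbdd : BddBelow (Set.range fun f : C => disS (fun i => (T₁ i).1) h₁ (f : X → Bool) + errS W (f : X → Bool)) := by
    refine ⟨0, ?_⟩
    rintro x ⟨f, rfl⟩
    have := disS_nonneg (fun i => (T₁ i).1) h₁ (f : X → Bool)
    have := errS_nonneg W (f : X → Bool)
    positivity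
  have key : ∀ f : C, qScore C T₁ W h₁ - 1/t ≤ disS (fun i => (T₂ i).1) h₂ (f : X → Bool) + errS W (f : X → Bool) := by
    intro f
    have h1 : qScore C T₁ W h₁ ≤ disS (fun i => (T₁ i).1) h₁ (f : X → Bool) + errS W (f : X → Bool) :=
      ciInf_le hbdd f
    have h2 := disS_le_of_agree (fun i => (T₁ i).1) (fun i => (T₂ i).1) h₁ h₂ (f : X → Bool) i₀ hag
    linarith
  have := le_ciInf key
  simp only [qScore] at this ⊢
  linarith


lemma exp_half_sq : Real.exp (1/2 : ℝ) * Real.exp (1/2 : ℝ) = Real.exp 1 := by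
  rw [← Real.exp_add]; norm_num

lemma expMech_apply_le {H₁ H₂ : Type*} [Fintype H₁] [Nonempty H₁] [Fintype H₂] [Nonempty H₂]
    (s₁ : H₁ → ℝ) (s₂ : H₂ → ℝ) (φ : H₁ → H₂) (ψ : H₂ → H₁ × Bool)
    (hψ : Function.Injective ψ)
    (hφ : ∀ ℓ, Real.exp (s₁ ℓ) ≤ Real.exp (1/2 : ℝ) * Real.exp (s₂ (φ ℓ)))
    (hψs : ∀ m, Real.exp (s₂ m) ≤ Real.exp (1/2 : ℝ) * Real.exp (s₁ (ψ m).1))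
    (ℓ : H₁) :
    expMech s₁ ℓ ≤ ENNReal.ofReal (2 * Real.exp 1) * expMech s₂ (φ ℓ) := by
  classical
  have hz₁ : (0:ℝ) < ∑ f, Real.exp (s₁ f) :=
    Finset.sum_pos (fun f _ => Real.exp_pos _) Finset.univ_nonempty
  have hz₂ : (0:ℝ) < ∑ m, Real.exp (s₂ m) :=
    Finset.sum_pos (fun f _ => Real.exp_pos _) Finset.univ_nonempty
  have hzb : ∑ m, Real.exp (s₂ m) ≤ 2 * Real.exp (1/2 : ℝ) * ∑ f, Real.exp (s₁ f) := by
    calc ∑ m, Real.exp (s₂ m) ≤ ∑ m, Real.exp (1/2 : ℝ) * Real.exp (s₁ (ψ m).1) :=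
          Finset.sum_le_sum fun m _ => hψs m
    _ = Real.exp (1/2 : ℝ) * ∑ m, Real.exp (s₁ (ψ m).1) := by rw [Finset.mul_sum]
    _ ≤ Real.exp (1/2 : ℝ) * ∑ p : H₁ × Bool, Real.exp (s₁ p.1) := by
        have h1 : ∑ m, Real.exp (s₁ (ψ m).1)
            = ∑ p ∈ Finset.univ.image ψ, Real.exp (s₁ p.1) :=
          (Finset.sum_image (f := fun p : H₁ × Bool => Real.exp (s₁ p.1)) (g := ψ) (fun a _ b _ h => hψ h)).symm
        rw [h1]
        have h2 := Finset.sum_le_sum_of_subset_of_nonneg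
          (Finset.subset_univ (Finset.univ.image ψ))
          (fun (p : H₁ × Bool) _ _ => (Real.exp_pos (s₁ p.1)).le)
        exact mul_le_mul_of_nonneg_left h2 (Real.exp_pos _).le
    _ = 2 * Real.exp (1/2 : ℝ) * ∑ f, Real.exp (s₁ f) := by
        rw [Fintype.sum_prod_type]
        simp only [Finset.sum_const, Finset.card_univ, Fintype.card_bool, two_nsmul]
        rw [Finset.sum_add_distrib]
        ring
  have e1 : expMech s₁ ℓ = ENNReal.ofReal (Real.exp (s₁ ℓ) / ∑ f, Real.exp (s₁ f)) := by
    rw [ENNReal.ofReal_div_of_pos hz₁,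
      ENNReal.ofReal_sum_of_nonneg (fun _ _ => (Real.exp_pos _).le)]
    rfl
  have e2 : expMech s₂ (φ ℓ) = ENNReal.ofReal (Real.exp (s₂ (φ ℓ)) / ∑ m, Real.exp (s₂ m)) := by
    rw [ENNReal.ofReal_div_of_pos hz₂,
      ENNReal.ofReal_sum_of_nonneg (fun _ _ => (Real.exp_pos _).le)]
    rfl
  rw [e1, e2, ← ENNReal.ofReal_mul (by positivity)]
  apply ENNReal.ofReal_le_ofReal
  rw [mul_div_assoc'] at *
  rw [div_le_div_iff₀ hz₁ hz₂]
  have hkey := mul_le_mul (hφ ℓ) hzb hz₂.le (by positivity)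
  have hrw : Real.exp (1/2 : ℝ) * Real.exp (s₂ (φ ℓ)) *
      (2 * Real.exp (1/2 : ℝ) * ∑ f, Real.exp (s₁ f))
      = 2 * Real.exp 1 * Real.exp (s₂ (φ ℓ)) * ∑ f, Real.exp (s₁ f) := by
    rw [← exp_half_sq]; ring
  rw [hrw] at hkey
  linarith


/-- Claim 3.7, privacy of `Aux` with respect to `U`. -/
theorem privacy_of_Aux {X : Type*} (C : Set (X → Bool)) (hC : C.Nonempty)
    (ε δ : ℝ) {u v w : ℕ} (n : ℕ)
    (V : Fin v → X × Bool) (W : Fin w → X × Bool)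
    (pick : (Fin (u + v) → X) → (Fin (u + v) → Bool) → (X → Bool))
    (hbar : (Fin v → X × Bool) → (X → Bool))
    (A : (Fin (u + v) → X × Bool) → PMF (X → Bool))
    (hε : 0 < ε) (hε1 : ε ≤ 1) (hδ : 0 ≤ δ)
    (hpick : ∀ (xs : Fin (u + v) → X) (g : Fin (u + v) → Bool),
      (∃ c ∈ C, ∀ i, c (xs i) = g i) → pick xs g ∈ C ∧ ∀ i, pick xs g (xs i) = g i)
    (hhbar : ∀ Vl : Fin v → X × Bool, (∃ c ∈ C, ∀ j, c (Vl j).1 = (Vl j).2) →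
      hbar Vl ∈ C ∧ ∀ j, hbar Vl (Vl j).1 = (Vl j).2)
    (hT : ε * (n : ℝ) ≤ ((u + v : ℕ) : ℝ)) (hW : (w : ℝ) ≤ (n : ℝ) - ε * (n : ℝ))
    (hA : IsDP A 1 δ) :
    ∀ U₁ U₂ : Fin u → X × Bool, Neighboring U₁ U₂ → ∀ O : Set (X → Bool),
      (Aux C hC ε U₁ V W pick hbar A).toOuterMeasure O ≤
        ENNReal.ofReal (Real.exp (2 + 2 * Real.log 2)) *
          (Aux C hC ε U₂ V W pick hbar A).toOuterMeasure O
        + ENNReal.ofReal (4 * Real.exp 1 * δ) := by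
  classical
  intro U₁ U₂ hnb O
  obtain ⟨i₀, hne0, heq0⟩ := hnb
  have hu : 0 < u := i₀.pos
  have htpos : (0:ℝ) < ((u + v : ℕ) : ℝ) := by
    have h0 : 0 < u + v := Nat.lt_of_lt_of_le hu (Nat.le_add_right u v)
    exact_mod_cast h0
  set i' : Fin (u + v) := Fin.castAdd v i₀ with hi'
  have hT12 : ∀ j, j ≠ i' → Fin.append U₁ V j = Fin.append U₂ V j := by
    intro j
    refine Fin.addCases (motive := fun j => j ≠ i' → Fin.append U₁ V j = Fin.append U₂ V j)
      (fun i hi => ?_) (fun i hi => ?_) j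
    · rw [Fin.append_left, Fin.append_left]
      apply heq0
      intro h; apply hi; rw [h, hi']
    · rw [Fin.append_right, Fin.append_right]
  have hT21 : ∀ j, j ≠ i' → Fin.append U₂ V j = Fin.append U₁ V j := fun j hj => (hT12 j hj).symm
  have hnat_ne : ∀ j : Fin v, Fin.natAdd u j ≠ i' := by
    intro j h
    have h1 : u + (j : ℕ) = (i₀ : ℕ) := by
      have := congrArg Fin.val h
      simpa [hi'] using this
    have h2 := i₀.isLt
    omega
  -- instances
  letI F1 : Fintype {g : Fin (u + v) → Bool // ∃ c ∈ C, ∀ i, c (Fin.append U₁ V i).1 = g i} := Fintype.ofFinite _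
  letI F2 : Fintype {g : Fin (u + v) → Bool // ∃ c ∈ C, ∀ i, c (Fin.append U₂ V i).1 = g i} := Fintype.ofFinite _
  haveI N1 : Nonempty {g : Fin (u + v) → Bool // ∃ c ∈ C, ∀ i, c (Fin.append U₁ V i).1 = g i} :=
    ⟨⟨fun i => hC.choose (Fin.append U₁ V i).1, hC.choose, hC.choose_spec, fun _ => rfl⟩⟩
  haveI N2 : Nonempty {g : Fin (u + v) → Bool // ∃ c ∈ C, ∀ i, c (Fin.append U₂ V i).1 = g i} :=
    ⟨⟨fun i => hC.choose (Fin.append U₂ V i).1, hC.choose, hC.choose_spec, fun _ => rfl⟩⟩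
  -- the maps between labeling spaces
  set φ : {g : Fin (u + v) → Bool // ∃ c ∈ C, ∀ i, c (Fin.append U₁ V i).1 = g i} → {g : Fin (u + v) → Bool // ∃ c ∈ C, ∀ i, c (Fin.append U₂ V i).1 = g i} :=
    fun ℓ => ⟨fun i => ℓ.2.choose (Fin.append U₂ V i).1, ℓ.2.choose, ℓ.2.choose_spec.1, fun _ => rfl⟩
    with hφdef
  set ρ : {g : Fin (u + v) → Bool // ∃ c ∈ C, ∀ i, c (Fin.append U₂ V i).1 = g i} → {g : Fin (u + v) → Bool // ∃ c ∈ C, ∀ i, c (Fin.append U₁ V i).1 = g i} :=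
    fun m => ⟨fun i => m.2.choose (Fin.append U₁ V i).1, m.2.choose, m.2.choose_spec.1, fun _ => rfl⟩
    with hρdef
  have hφ : ∀ ℓ : {g : Fin (u + v) → Bool // ∃ c ∈ C, ∀ i, c (Fin.append U₁ V i).1 = g i}, ∀ j, j ≠ i' → (φ ℓ).1 j = ℓ.1 j := by
    intro ℓ j hj
    show ℓ.2.choose (Fin.append U₂ V j).1 = ℓ.1 j
    rw [← hT12 j hj]
    exact ℓ.2.choose_spec.2 j
  have hρ : ∀ m : {g : Fin (u + v) → Bool // ∃ c ∈ C, ∀ i, c (Fin.append U₂ V i).1 = g i}, ∀ j, j ≠ i' → (ρ m).1 j = m.1 j := by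
    intro m j hj
    show m.2.choose (Fin.append U₁ V j).1 = m.1 j
    rw [hT12 j hj]
    exact m.2.choose_spec.2 j
  have hψinj : Function.Injective (fun ℓ : {g : Fin (u + v) → Bool // ∃ c ∈ C, ∀ i, c (Fin.append U₁ V i).1 = g i} => (φ ℓ, ℓ.1 i')) := by
    intro a b hab
    have h1 : φ a = φ b := congrArg Prod.fst hab
    have h2 : a.1 i' = b.1 i' := congrArg Prod.snd hab
    apply Subtype.ext; funext j
    rcases eq_or_ne j i' with rfl | hj
    · exact h2
    · rw [← hφ a j hj, ← hφ b j hj, h1]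
  have hρinj : Function.Injective (fun m : {g : Fin (u + v) → Bool // ∃ c ∈ C, ∀ i, c (Fin.append U₂ V i).1 = g i} => (ρ m, m.1 i')) := by
    intro a b hab
    have h1 : ρ a = ρ b := congrArg Prod.fst hab
    have h2 : a.1 i' = b.1 i' := congrArg Prod.snd hab
    apply Subtype.ext; funext j
    rcases eq_or_ne j i' with rfl | hj
    · exact h2
    · rw [← hρ a j hj, ← hρ b j hj, h1]
  -- agreement of selected hypotheses off i'
  have hagree : ∀ ℓ : {g : Fin (u + v) → Bool // ∃ c ∈ C, ∀ i, c (Fin.append U₁ V i).1 = g i}, ∀ j, j ≠ i' →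
      pick (fun i => (Fin.append U₁ V i).1) ℓ.1 (Fin.append U₁ V j).1
        = pick (fun i => (Fin.append U₂ V i).1) (φ ℓ).1 (Fin.append U₂ V j).1 := by
    intro ℓ j hj
    have e1 := (hpick (fun i => (Fin.append U₁ V i).1) ℓ.1 ℓ.2).2 j
    have e2 := (hpick (fun i => (Fin.append U₂ V i).1) (φ ℓ).1 (φ ℓ).2).2 j
    rw [e1, e2, hφ ℓ j hj]
  have hagree2 : ∀ m : {g : Fin (u + v) → Bool // ∃ c ∈ C, ∀ i, c (Fin.append U₂ V i).1 = g i}, ∀ j, j ≠ i' →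
      pick (fun i => (Fin.append U₂ V i).1) m.1 (Fin.append U₂ V j).1
        = pick (fun i => (Fin.append U₁ V i).1) (ρ m).1 (Fin.append U₁ V j).1 := by
    intro m j hj
    have e1 := (hpick (fun i => (Fin.append U₂ V i).1) m.1 m.2).2 j
    have e2 := (hpick (fun i => (Fin.append U₁ V i).1) (ρ m).1 (ρ m).2).2 j
    rw [e1, e2, hρ m j hj]
  -- q-score comparisons
  have hq1 : ∀ ℓ : {g : Fin (u + v) → Bool // ∃ c ∈ C, ∀ i, c (Fin.append U₁ V i).1 = g i},
      qScore C (Fin.append U₂ V) W (pick (fun i => (Fin.append U₂ V i).1) (φ ℓ).1)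
        ≤ qScore C (Fin.append U₁ V) W (pick (fun i => (Fin.append U₁ V i).1) ℓ.1)
          + 1 / ((u + v : ℕ) : ℝ) := by
    intro ℓ
    refine qScore_le C hC _ _ W _ _ i' ?_
    intro j hj
    exact ⟨congrArg Prod.fst (hT21 j hj), (hagree ℓ j hj).symm⟩
  have hq2 : ∀ m : {g : Fin (u + v) → Bool // ∃ c ∈ C, ∀ i, c (Fin.append U₂ V i).1 = g i},
      qScore C (Fin.append U₁ V) W (pick (fun i => (Fin.append U₁ V i).1) (ρ m).1)
        ≤ qScore C (Fin.append U₂ V) W (pick (fun i => (Fin.append U₂ V i).1) m.1)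
          + 1 / ((u + v : ℕ) : ℝ) := by
    intro m
    refine qScore_le C hC _ _ W _ _ i' ?_
    intro j hj
    exact ⟨congrArg Prod.fst (hT12 j hj), (hagree2 m j hj).symm⟩
  -- ε w ≤ u + v
  have hεw : ε * (w:ℝ) ≤ ((u + v : ℕ) : ℝ) := by
    have h1 : ε * (w:ℝ) ≤ ε * ((n:ℝ) - ε * n) := mul_le_mul_of_nonneg_left hW hε.le
    have h2 := mul_le_mul_of_nonneg_right hT (by linarith : (0:ℝ) ≤ 1 - ε)
    nlinarith [mul_nonneg hε.le htpos.le]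
  -- score functions and exponent comparisons
  set sf1 : {g : Fin (u + v) → Bool // ∃ c ∈ C, ∀ i, c (Fin.append U₁ V i).1 = g i} → ℝ := fun ℓ =>
    -(ε * qScore C (Fin.append U₁ V) W (pick (fun i => (Fin.append U₁ V i).1) ℓ.1) * w) / 2
    with hsf1
  set sf2 : {g : Fin (u + v) → Bool // ∃ c ∈ C, ∀ i, c (Fin.append U₂ V i).1 = g i} → ℝ := fun m =>
    -(ε * qScore C (Fin.append U₂ V) W (pick (fun i => (Fin.append U₂ V i).1) m.1) * w) / 2
    with hsf2
  have hdiv : ε * w * (1 / ((u + v : ℕ) : ℝ)) ≤ 1 := by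
    rw [mul_one_div, div_le_one htpos]; exact hεw
  have hexp1 : ∀ ℓ : {g : Fin (u + v) → Bool // ∃ c ∈ C, ∀ i, c (Fin.append U₁ V i).1 = g i}, Real.exp (sf1 ℓ) ≤ Real.exp (1/2 : ℝ) * Real.exp (sf2 (φ ℓ)) := by
    intro ℓ
    rw [← Real.exp_add, Real.exp_le_exp, hsf1, hsf2]
    have h := hq1 ℓ
    have hw0 : (0:ℝ) ≤ ε * w := by positivity
    nlinarith [mul_le_mul_of_nonneg_left h hw0]
  have hexp2 : ∀ m : {g : Fin (u + v) → Bool // ∃ c ∈ C, ∀ i, c (Fin.append U₂ V i).1 = g i}, Real.exp (sf2 m) ≤ Real.exp (1/2 : ℝ) * Real.exp (sf1 (ρ m)) := by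
    intro m
    rw [← Real.exp_add, Real.exp_le_exp, hsf1, hsf2]
    have h := hq2 m
    have hw0 : (0:ℝ) ≤ ε * w := by positivity
    nlinarith [mul_le_mul_of_nonneg_left h hw0]
  have hpm : ∀ ℓ : {g : Fin (u + v) → Bool // ∃ c ∈ C, ∀ i, c (Fin.append U₁ V i).1 = g i}, expMech sf1 ℓ ≤ ENNReal.ofReal (2 * Real.exp 1) * expMech sf2 (φ ℓ) :=
    fun ℓ => expMech_apply_le sf1 sf2 φ (fun m => (ρ m, m.1 i')) hρinj hexp1
      (fun m => hexp2 m) ℓ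
  -- output-distribution functions
  set M1 : {g : Fin (u + v) → Bool // ∃ c ∈ C, ∀ i, c (Fin.append U₁ V i).1 = g i} → ℝ≥0∞ := fun ℓ =>
    ((A fun i => ((Fin.append U₁ V i).1,
        pick (fun i => (Fin.append U₁ V i).1) ℓ.1 (Fin.append U₁ V i).1)).map
      (fun g x => xor (g x)
        (hbar (fun j => ((V j).1, pick (fun i => (Fin.append U₁ V i).1) ℓ.1 (V j).1)) x))).toOuterMeasure O
    with hM1
  set M2 : {g : Fin (u + v) → Bool // ∃ c ∈ C, ∀ i, c (Fin.append U₂ V i).1 = g i} → ℝ≥0∞ := fun m =>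
    ((A fun i => ((Fin.append U₂ V i).1,
        pick (fun i => (Fin.append U₂ V i).1) m.1 (Fin.append U₂ V i).1)).map
      (fun g x => xor (g x)
        (hbar (fun j => ((V j).1, pick (fun i => (Fin.append U₂ V i).1) m.1 (V j).1)) x))).toOuterMeasure O
    with hM2
  have hM : ∀ ℓ : {g : Fin (u + v) → Bool // ∃ c ∈ C, ∀ i, c (Fin.append U₁ V i).1 = g i}, M1 ℓ ≤ ENNReal.ofReal (Real.exp 1) * M2 (φ ℓ) + ENNReal.ofReal δ := by
    intro ℓ
    rw [hM1, hM2]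
    have hVlab : (fun j => ((V j).1, pick (fun i => (Fin.append U₁ V i).1) ℓ.1 (V j).1))
        = (fun j => ((V j).1, pick (fun i => (Fin.append U₂ V i).1) (φ ℓ).1 (V j).1)) := by
      funext j
      have h := hagree ℓ (Fin.natAdd u j) (hnat_ne j)
      rw [Fin.append_right U₁ V, Fin.append_right U₂ V] at h
      simp [h]
    simp only [hVlab, PMF.toOuterMeasure_map_apply]
    have hDoff : ∀ j, j ≠ i' →
        ((Fin.append U₁ V j).1, pick (fun i => (Fin.append U₁ V i).1) ℓ.1 (Fin.append U₁ V j).1)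
          = ((Fin.append U₂ V j).1, pick (fun i => (Fin.append U₂ V i).1) (φ ℓ).1 (Fin.append U₂ V j).1) := by
      intro j hj
      rw [Prod.mk.injEq]
      exact ⟨congrArg Prod.fst (hT12 j hj), hagree ℓ j hj⟩
    by_cases hD : (fun i => ((Fin.append U₁ V i).1,
          pick (fun i => (Fin.append U₁ V i).1) ℓ.1 (Fin.append U₁ V i).1))
        = (fun i => ((Fin.append U₂ V i).1,
          pick (fun i => (Fin.append U₂ V i).1) (φ ℓ).1 (Fin.append U₂ V i).1))
    · rw [hD]
      have h1 : (1:ℝ≥0∞) ≤ ENNReal.ofReal (Real.exp 1) := by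
        rw [ENNReal.one_le_ofReal]
        exact Real.one_le_exp (by norm_num)
      calc (A _).toOuterMeasure _ = 1 * (A _).toOuterMeasure _ := (one_mul _).symm
        _ ≤ ENNReal.ofReal (Real.exp 1) * (A _).toOuterMeasure _ := mul_le_mul_left h1 _
        _ ≤ _ + ENNReal.ofReal δ := le_self_add
    · refine hA _ _ ⟨i', ?_, hDoff⟩ _
      intro hcontr
      apply hD
      funext j
      rcases eq_or_ne j i' with rfl | hj
      · exact hcontr
      · exact hDoff j hj
  -- rewrite both sides as sums
  have hL : (Aux C hC ε U₁ V W pick hbar A).toOuterMeasure O = ∑' ℓ : {g : Fin (u + v) → Bool // ∃ c ∈ C, ∀ i, c (Fin.append U₁ V i).1 = g i}, expMech sf1 ℓ * M1 ℓ := by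
    simp only [Aux, relPMF, PMF.bind_map, PMF.toOuterMeasure_bind_apply]
    rfl
  have hR : (Aux C hC ε U₂ V W pick hbar A).toOuterMeasure O = ∑' m : {g : Fin (u + v) → Bool // ∃ c ∈ C, ∀ i, c (Fin.append U₂ V i).1 = g i}, expMech sf2 m * M2 m := by
    simp only [Aux, relPMF, PMF.bind_map, PMF.toOuterMeasure_bind_apply]
    rfl
  rw [hL, hR]
  -- main chain
  have hsum2 : ∑' m : {g : Fin (u + v) → Bool // ∃ c ∈ C, ∀ i, c (Fin.append U₂ V i).1 = g i}, expMech sf2 m * (ENNReal.ofReal (Real.exp 1) * M2 m + ENNReal.ofReal δ)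
      = ENNReal.ofReal (Real.exp 1) * (∑' m : {g : Fin (u + v) → Bool // ∃ c ∈ C, ∀ i, c (Fin.append U₂ V i).1 = g i}, expMech sf2 m * M2 m) + ENNReal.ofReal δ := by
    have h1 : ∀ m : {g : Fin (u + v) → Bool // ∃ c ∈ C, ∀ i, c (Fin.append U₂ V i).1 = g i}, expMech sf2 m * (ENNReal.ofReal (Real.exp 1) * M2 m + ENNReal.ofReal δ)
        = ENNReal.ofReal (Real.exp 1) * (expMech sf2 m * M2 m) + ENNReal.ofReal δ * expMech sf2 m := by
      intro m; ring
    rw [tsum_congr h1, ENNReal.tsum_add, ENNReal.tsum_mul_left, ENNReal.tsum_mul_left,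
      PMF.tsum_coe, mul_one]
  have cA : ENNReal.ofReal (2 * Real.exp 1) * 2 * ENNReal.ofReal (Real.exp 1)
      = ENNReal.ofReal (Real.exp (2 + 2 * Real.log 2)) := by
    have h2 : (2:ℝ≥0∞) = ENNReal.ofReal (2:ℝ) := by
      rw [ENNReal.ofReal_ofNat]
    rw [h2, ← ENNReal.ofReal_mul (by positivity), ← ENNReal.ofReal_mul (by positivity)]
    congr 1
    have e1 : Real.exp (2 * Real.log 2) = 4 := by
      rw [two_mul, Real.exp_add, Real.exp_log two_pos]; norm_num
    have e2 : Real.exp (2:ℝ) = Real.exp 1 * Real.exp 1 := by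
      rw [← Real.exp_add]; norm_num
    rw [Real.exp_add, e1, e2]; ring
  have cB : ENNReal.ofReal (2 * Real.exp 1) * 2 * ENNReal.ofReal δ
      = ENNReal.ofReal (4 * Real.exp 1 * δ) := by
    have h2 : (2:ℝ≥0∞) = ENNReal.ofReal (2:ℝ) := by
      rw [ENNReal.ofReal_ofNat]
    rw [h2, ← ENNReal.ofReal_mul (by positivity), ← ENNReal.ofReal_mul (by positivity)]
    congr 1
    ring
  calc ∑' ℓ : {g : Fin (u + v) → Bool // ∃ c ∈ C, ∀ i, c (Fin.append U₁ V i).1 = g i}, expMech sf1 ℓ * M1 ℓ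
      ≤ ∑' ℓ : {g : Fin (u + v) → Bool // ∃ c ∈ C, ∀ i, c (Fin.append U₁ V i).1 = g i}, (ENNReal.ofReal (2 * Real.exp 1) * expMech sf2 (φ ℓ)) *
          (ENNReal.ofReal (Real.exp 1) * M2 (φ ℓ) + ENNReal.ofReal δ) :=
        ENNReal.tsum_le_tsum fun ℓ => mul_le_mul' (hpm ℓ) (hM ℓ)
    _ = ENNReal.ofReal (2 * Real.exp 1) * ∑' ℓ : {g : Fin (u + v) → Bool // ∃ c ∈ C, ∀ i, c (Fin.append U₁ V i).1 = g i},
          expMech sf2 (φ ℓ) * (ENNReal.ofReal (Real.exp 1) * M2 (φ ℓ) + ENNReal.ofReal δ) := by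
        rw [← ENNReal.tsum_mul_left]
        exact tsum_congr fun ℓ => by ring
    _ ≤ ENNReal.ofReal (2 * Real.exp 1) * ∑' p : ({g : Fin (u + v) → Bool // ∃ c ∈ C, ∀ i, c (Fin.append U₂ V i).1 = g i} × Bool),
          expMech sf2 p.1 * (ENNReal.ofReal (Real.exp 1) * M2 p.1 + ENNReal.ofReal δ) := by
        refine mul_le_mul_right ?_ _
        exact ENNReal.tsum_comp_le_tsum_of_injective hψinj
          (fun p => expMech sf2 p.1 * (ENNReal.ofReal (Real.exp 1) * M2 p.1 + ENNReal.ofReal δ))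
    _ = ENNReal.ofReal (2 * Real.exp 1) * (2 * ∑' m : {g : Fin (u + v) → Bool // ∃ c ∈ C, ∀ i, c (Fin.append U₂ V i).1 = g i},
          expMech sf2 m * (ENNReal.ofReal (Real.exp 1) * M2 m + ENNReal.ofReal δ)) := by
        rw [ENNReal.tsum_prod']
        congr 1
        rw [← ENNReal.tsum_mul_left]
        exact tsum_congr fun m => by rw [tsum_bool, two_mul]
    _ = ENNReal.ofReal (2 * Real.exp 1) * (2 * (ENNReal.ofReal (Real.exp 1) *
          (∑' m : {g : Fin (u + v) → Bool // ∃ c ∈ C, ∀ i, c (Fin.append U₂ V i).1 = g i}, expMech sf2 m * M2 m) + ENNReal.ofReal δ)) := by rw [hsum2]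
    _ = (ENNReal.ofReal (2 * Real.exp 1) * 2 * ENNReal.ofReal (Real.exp 1)) *
          (∑' m : {g : Fin (u + v) → Bool // ∃ c ∈ C, ∀ i, c (Fin.append U₂ V i).1 = g i}, expMech sf2 m * M2 m)
        + ENNReal.ofReal (2 * Real.exp 1) * 2 * ENNReal.ofReal δ := by ring
    _ = ENNReal.ofReal (Real.exp (2 + 2 * Real.log 2)) * (∑' m : {g : Fin (u + v) → Bool // ∃ c ∈ C, ∀ i, c (Fin.append U₂ V i).1 = g i}, expMech sf2 m * M2 m)
        + ENNReal.ofReal (4 * Real.exp 1 * δ) := by rw [cA, cB]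
end

section
/- Let ε ≤ 1 and let A be an (ε,δ)-differentially private algorithm taking a dataset of size m as input. For any n with n ≥ 2 and 6εm/n ≤ 1, define A' on input a dataset S of size n by: construct a dataset T of size m where each point is sampled independently and uniformly from S with replacement, and run A on T. Then A' is (ε',δ')-differentially private with ε' = 6εm/n and δ' = exp(6εm/n)·(4m/n)·δ. -/
open MeasureTheory
open scoped ENNReal

open Finset

theorem sum_prod_fn {C : Type*} [Fintype C] :
    ∀ (m : ℕ) (h : Fin m → C → ℝ),
    ∑ q : Fin m → C, ∏ j, h j (q j) = ∏ j, ∑ u, h j u := by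
  intro m
  induction m with
  | zero => intro h; simp
  | succ m ih =>
    intro h
    have e := Equiv.sum_comp (Fin.consEquiv (fun _ : Fin (m+1) => C))
      (fun q : Fin (m+1) → C => ∏ j, h j (q j))
    rw [← e, Fintype.sum_prod_type]
    have key : ∀ (u : C) (q' : Fin m → C),
        (∏ j, h j ((Fin.consEquiv (fun _ => C)) (u, q') j))
          = h 0 u * ∏ j : Fin m, h j.succ (q' j) := by
      intro u q'
      have : (fun j => h j ((Fin.consEquiv (fun _ => C)) (u, q') j))
          = fun j => Fin.cons (α := fun _ : Fin (m+1) => ℝ) (h 0 u) (fun j => h j.succ (q' j)) j := by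
        funext j
        refine Fin.cases ?_ ?_ j <;> simp [Fin.consEquiv]
      rw [this, Fin.prod_cons]
    simp_rw [key, ← Finset.mul_sum, ih]
    rw [← Finset.sum_mul, Fin.prod_univ_succ]

open Finset

theorem regroup {C β : Type*} [Fintype C] [Fintype β] [DecidableEq β]
    (wgt : C → ℝ) (out : C → β) (F : β → ℝ) :
    ∑ u, wgt u * F (out u) = ∑ v, (∑ u, if out u = v then wgt u else 0) * F v := by
  have : ∀ v, (∑ u, if out u = v then wgt u else 0) * F v
      = ∑ u, if out u = v then wgt u * F v else 0 := by
    intro v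
    rw [Finset.sum_mul]
    exact Finset.sum_congr rfl fun u _ => by split_ifs <;> simp
  simp_rw [this]
  rw [Finset.sum_comm]
  refine Finset.sum_congr rfl fun u _ => ?_
  simp [Finset.sum_ite_eq']

theorem master {C β : Type*} [Fintype C] [Fintype β] [DecidableEq β] (out : C → β) :
    ∀ (m : ℕ) (wgt : Fin m → C → ℝ) (c : (Fin m → β) → ℝ),
    ∑ q : Fin m → C, (∏ j, wgt j (q j)) * c (fun j => out (q j)) =
    ∑ g : Fin m → β, (∏ j, ∑ u, if out u = g j then wgt j u else 0) * c g := by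
  intro m
  induction m with
  | zero =>
    intro wgt c
    rw [Fintype.sum_unique, Fintype.sum_unique]
    simp only [Finset.univ_eq_empty, Finset.prod_empty, one_mul]
    exact congrArg c (funext fun j => j.elim0)
  | succ m ih =>
    intro wgt c
    rw [← Equiv.sum_comp (Fin.consEquiv (fun _ : Fin (m+1) => C))
      (fun q : Fin (m+1) → C => (∏ j, wgt j (q j)) * c (fun j => out (q j))),
      ← Equiv.sum_comp (Fin.consEquiv (fun _ : Fin (m+1) => β))
      (fun g : Fin (m+1) → β => (∏ j, ∑ u, if out u = g j then wgt j u else 0) * c g),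
      Fintype.sum_prod_type, Fintype.sum_prod_type]
    have key : ∀ (u : C) (q' : Fin m → C),
        ((∏ j, wgt j ((Fin.consEquiv (fun _ => C)) (u, q') j)) *
          c (fun j => out ((Fin.consEquiv (fun _ => C)) (u, q') j)))
        = wgt 0 u * ((∏ j : Fin m, wgt j.succ (q' j)) *
            c (Fin.cons (out u) (fun j => out (q' j)))) := by
      intro u q'
      have h1 : (fun j => wgt j ((Fin.consEquiv (fun _ => C)) (u, q') j))
          = fun j => Fin.cons (α := fun _ : Fin (m+1) => ℝ) (wgt 0 u)
              (fun j => wgt j.succ (q' j)) j := by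
        funext j; refine Fin.cases ?_ ?_ j <;> simp [Fin.consEquiv]
      have h2 : (fun j => out ((Fin.consEquiv (fun _ => C)) (u, q') j))
          = Fin.cons (out u) (fun j => out (q' j)) := by
        funext j; refine Fin.cases ?_ ?_ j <;> simp [Fin.consEquiv]
      rw [h1, h2, Fin.prod_cons]; ring
    simp_rw [key, ← Finset.mul_sum]
    have ihs : ∀ u : C,
        (∑ q' : Fin m → C, (∏ j : Fin m, wgt j.succ (q' j)) *
          c (Fin.cons (out u) (fun j => out (q' j))))
        = ∑ g' : Fin m → β, (∏ j, ∑ w, if out w = g' j then wgt j.succ w else 0) *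
            c (Fin.cons (out u) g') := by
      intro u
      exact ih (fun j => wgt j.succ) (fun g' => c (Fin.cons (out u) g'))
    simp_rw [ihs]
    -- now regroup the u-sum
    rw [regroup (fun u => wgt 0 u) out
      (fun v => ∑ g' : Fin m → β, (∏ j, ∑ w, if out w = g' j then wgt j.succ w else 0) *
        c (Fin.cons v g'))]
    refine Finset.sum_congr rfl fun v _ => ?_
    rw [Finset.mul_sum]
    refine Finset.sum_congr rfl fun g' _ => ?_
    have h3 : ∀ j : Fin (m+1),
        (∑ u, if out u = (Fin.consEquiv (fun _ : Fin (m+1) => β)) (v, g') j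
          then wgt j u else 0)
        = Fin.cons (α := fun _ : Fin (m+1) => ℝ) (∑ u, if out u = v then wgt 0 u else 0)
            (fun j => ∑ w, if out w = g' j then wgt j.succ w else 0) j := by
      intro j; refine Fin.cases ?_ ?_ j <;> simp [Fin.consEquiv]
    refine Eq.symm ?_
    calc (∏ j, ∑ u, if out u = (Fin.consEquiv (fun _ : Fin (m+1) => β)) (v, g') j then wgt j u else 0) *
          c ((Fin.consEquiv (fun _ : Fin (m+1) => β)) (v, g'))
        = (∏ j, Fin.cons (α := fun _ : Fin (m+1) => ℝ) (∑ u, if out u = v then wgt 0 u else 0)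
            (fun j => ∑ w, if out w = g' j then wgt j.succ w else 0) j) * c (Fin.cons v g') := by
          rw [Finset.prod_congr rfl fun j _ => h3 j]; rfl
      _ = (∑ u, if out u = v then wgt 0 u else 0) *
            ((∏ j : Fin m, ∑ w, if out w = g' j then wgt j.succ w else 0) * c (Fin.cons v g')) := by
          rw [Fin.prod_cons]; ring

open Finset MeasureTheory
open scoped ENNReal

theorem pmf_om_le_one {Ω : Type*} (p : PMF Ω) (O : Set Ω) : p.toOuterMeasure O ≤ 1 := by
  have h := p.toOuterMeasure_mono (s := O) (t := Set.univ)
    (le_trans Set.inter_subset_left (Set.subset_univ _))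
  rwa [(p.toOuterMeasure_apply_eq_one_iff Set.univ).2 (Set.subset_univ _)] at h

theorem pmf_om_ne_top {Ω : Type*} (p : PMF Ω) (O : Set Ω) : p.toOuterMeasure O ≠ ⊤ :=
  (lt_of_le_of_lt (pmf_om_le_one p O) ENNReal.one_lt_top).ne

theorem dp_real {Z Ω : Type*} {m : ℕ} {A : (Fin m → Z) → PMF Ω} {ε δ : ℝ}
    (hε : 0 ≤ ε) (hδ : 0 ≤ δ) (hA : IsDP A ε δ) {T₁ T₂ : Fin m → Z}
    (hnb : Neighboring T₁ T₂) (O : Set Ω) :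
    ((A T₁).toOuterMeasure O).toReal ≤
      Real.exp ε * ((A T₂).toOuterMeasure O).toReal + δ := by
  have h := hA T₁ T₂ hnb O
  have hfin : ENNReal.ofReal (Real.exp ε) * (A T₂).toOuterMeasure O
      + ENNReal.ofReal δ ≠ ⊤ :=
    ENNReal.add_ne_top.2 ⟨ENNReal.mul_ne_top ENNReal.ofReal_ne_top (pmf_om_ne_top _ _),
      ENNReal.ofReal_ne_top⟩
  have h2 := ENNReal.toReal_mono hfin h
  rwa [ENNReal.toReal_add (ENNReal.mul_ne_top ENNReal.ofReal_ne_top (pmf_om_ne_top _ _))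
    ENNReal.ofReal_ne_top, ENNReal.toReal_mul, ENNReal.toReal_ofReal (Real.exp_pos ε).le,
    ENNReal.toReal_ofReal hδ] at h2

theorem group_dp {Z Ω : Type*} {m : ℕ} {A : (Fin m → Z) → PMF Ω} {ε δ : ℝ}
    (hε : 0 ≤ ε) (hδ : 0 ≤ δ) (hA : IsDP A ε δ) (O : Set Ω) :
    ∀ (k : ℕ) (T₁ T₂ : Fin m → Z),
      (∃ D : Finset (Fin m), D.card ≤ k ∧ ∀ j ∉ D, T₁ j = T₂ j) →
      ((A T₁).toOuterMeasure O).toReal ≤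
        Real.exp ε ^ k * ((A T₂).toOuterMeasure O).toReal
          + k * Real.exp ε ^ k * Real.exp (-ε) * δ := by
  intro k
  induction k with
  | zero =>
    intro T₁ T₂ ⟨D, hD, hout⟩
    have : T₁ = T₂ := funext fun j => hout j (by
      rw [Finset.card_eq_zero.1 (Nat.le_zero.1 hD)]; exact Finset.notMem_empty j)
    subst this; simp
  | succ k ih =>
    intro T₁ T₂ ⟨D, hD, hout⟩
    have hP2 : (0:ℝ) ≤ ((A T₂).toOuterMeasure O).toReal := ENNReal.toReal_nonneg
    have hek : (1:ℝ) ≤ Real.exp ε ^ k := one_le_pow₀ (Real.one_le_exp hε)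
    have hek1 : (1:ℝ) ≤ Real.exp ε ^ (k+1) := one_le_pow₀ (Real.one_le_exp hε)
    have hcancel : Real.exp ε ^ (k+1) * Real.exp (-ε) = Real.exp ε ^ k := by
      rw [pow_succ, mul_assoc, ← Real.exp_add]; simp
    by_cases hTT : T₁ = T₂
    · subst hTT
      have hnn : (0:ℝ) ≤ ((k:ℝ)+1) * Real.exp ε ^ (k+1) * Real.exp (-ε) * δ := by positivity
      push_cast
      nlinarith [mul_nonneg (sub_nonneg.2 hek1) hP2]
    · have hex : ∃ j, T₁ j ≠ T₂ j := by
        by_contra hc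
        push_neg at hc
        exact hTT (funext hc)
      obtain ⟨j, hj⟩ := hex
      have hjD : j ∈ D := by
        by_contra hc
        exact hj (hout j hc)
      have hnb : Neighboring T₁ (Function.update T₁ j (T₂ j)) := by
        refine ⟨j, ?_, fun l hl => ?_⟩
        · rw [Function.update_self]; exact hj
        · rw [Function.update_of_ne hl]
      have h1 : ((A T₁).toOuterMeasure O).toReal ≤
          Real.exp ε * ((A (Function.update T₁ j (T₂ j))).toOuterMeasure O).toReal + δ :=
        dp_real hε hδ hA hnb O
      have h2 : ((A (Function.update T₁ j (T₂ j))).toOuterMeasure O).toReal ≤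
          Real.exp ε ^ k * ((A T₂).toOuterMeasure O).toReal
            + k * Real.exp ε ^ k * Real.exp (-ε) * δ := by
        refine ih _ T₂ ⟨D.erase j, ?_, fun l hl => ?_⟩
        · have := Finset.card_erase_of_mem hjD
          omega
        · by_cases hlj : l = j
          · subst hlj; rw [Function.update_self]
          · rw [Function.update_of_ne hlj]
            exact hout l (fun hmem => hl (Finset.mem_erase.2 ⟨hlj, hmem⟩))
      have hεp : (0:ℝ) < Real.exp ε := Real.exp_pos ε
      have h3 := mul_le_mul_of_nonneg_left h2 hεp.le
      have hpow : Real.exp ε * Real.exp ε ^ k = Real.exp ε ^ (k+1) := by ring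
      push_cast
      have h4 : Real.exp ε * (Real.exp ε ^ k * ((A T₂).toOuterMeasure O).toReal
          + (k:ℝ) * Real.exp ε ^ k * Real.exp (-ε) * δ)
          = Real.exp ε ^ (k+1) * ((A T₂).toOuterMeasure O).toReal
            + (k:ℝ) * (Real.exp ε ^ (k+1) * Real.exp (-ε)) * δ := by ring
      rw [hcancel] at h4
      have h5 : ((k:ℝ)+1) * Real.exp ε ^ (k+1) * Real.exp (-ε) * δ
          = ((k:ℝ)+1) * (Real.exp ε ^ (k+1) * Real.exp (-ε)) * δ := by ring
      rw [hcancel] at h5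
      rw [h5]
      nlinarith [mul_nonneg (sub_nonneg.2 hek) hδ]

theorem exp_quad {ε : ℝ} (h0 : 0 ≤ ε) (h1 : ε ≤ 1) : Real.exp ε ≤ 1 + ε + ε ^ 2 := by
  have hb := Real.exp_bound (x := ε) (by rw [abs_of_nonneg h0]; exact h1) (n := 3) (by norm_num)
  have hsum : ∑ m ∈ Finset.range 3, ε ^ m / (m.factorial : ℝ) = 1 + ε + ε ^ 2 / 2 := by
    norm_num [Finset.sum_range_succ, Nat.factorial]
  rw [hsum, abs_of_nonneg h0] at hb
  have := abs_le.1 hb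
  have h3 : ε ^ 3 ≤ ε ^ 2 := by nlinarith
  have hfac : (3:ℕ).factorial = 6 := by decide
  rw [hfac] at this
  norm_num at this
  nlinarith [this.2]

theorem an_key {ε n : ℝ} (h0 : 0 ≤ ε) (h1 : ε ≤ 1) (hn : 2 ≤ n) :
    Real.exp ε + (n - 1) ≤ (1 + 6 * ε / n) * (Real.exp (-ε) + (n - 1)) := by
  have hn0 : (0:ℝ) < n := by linarith
  have hu := exp_quad h0 h1
  have hv : 1 - ε ≤ Real.exp (-ε) := by have := Real.add_one_le_exp (-ε); linarith
  rw [← mul_le_mul_iff_right₀ hn0]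
  have hr : n * ((1 + 6 * ε / n) * (Real.exp (-ε) + (n - 1)))
      = (n + 6 * ε) * (Real.exp (-ε) + (n - 1)) := by field_simp
  rw [hr]
  nlinarith [mul_nonneg h0 (by linarith : (0:ℝ) ≤ n - 2), sq_nonneg ε,
    mul_nonneg (mul_nonneg h0 h0) (by linarith : (0:ℝ) ≤ n - 2),
    mul_nonneg h0 (by linarith : (0:ℝ) ≤ 1 - ε)]

theorem an1 {ε n : ℝ} (h0 : 0 ≤ ε) (h1 : ε ≤ 1) (hn : 2 ≤ n) :
    Real.exp ε + (n - 1) ≤ Real.exp (6 * ε / n) * (Real.exp (-ε) + (n - 1)) := by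
  refine le_trans (an_key h0 h1 hn) (mul_le_mul_of_nonneg_right ?_ ?_)
  · have := Real.add_one_le_exp (6 * ε / n); linarith
  · have := (Real.exp_pos (-ε)).le; nlinarith

theorem an2 {ε n : ℝ} (h0 : 0 ≤ ε) (h1 : ε ≤ 1) (hn : 2 ≤ n) :
    Real.exp ε + (n - 1) ≤ n * Real.exp (6 * ε / n) := by
  have hn0 : (0:ℝ) < n := by linarith
  have hu := exp_quad h0 h1
  have h3 : 1 + 6 * ε / n ≤ Real.exp (6 * ε / n) := by
    have := Real.add_one_le_exp (6 * ε / n); linarith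
  have hr : n * (1 + 6 * ε / n) = n + 6 * ε := by field_simp
  nlinarith [mul_le_mul_of_nonneg_left h3 hn0.le]

set_option maxHeartbeats 1000000 in
theorem core {X Ω : Type*} {ε δ : ℝ} {m n : ℕ}
    (A : (Fin m → X × Bool) → PMF Ω)
    (hε0 : 0 ≤ ε) (hε1 : ε ≤ 1) (hδ : 0 ≤ δ) (hn : 2 ≤ n)
    (hA : IsDP A ε δ) (S₁ S₂ : Fin n → X × Bool) (i : Fin n)
    (hrest : ∀ j, j ≠ i → S₁ j = S₂ j) (O : Set Ω) :
    ∑ f : Fin m → Fin n, ((A fun j => S₁ (f j)).toOuterMeasure O).toReal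
      ≤ Real.exp (6 * ε * (m:ℝ) / (n:ℝ)) *
          ∑ f : Fin m → Fin n, ((A fun j => S₂ (f j)).toOuterMeasure O).toReal
        + (n:ℝ) ^ m * (Real.exp (6 * ε * (m:ℝ) / (n:ℝ)) * (4 * (m:ℝ) / (n:ℝ)) * δ) := by
  have hnR : (2:ℝ) ≤ (n:ℝ) := by exact_mod_cast hn
  have hn0 : (0:ℝ) < n := by linarith
  cases m with
  | zero =>
    have hab : ∀ f : Fin 0 → Fin n,
        ((A fun j => S₁ (f j)).toOuterMeasure O).toReal
          = ((A fun j => S₂ (f j)).toOuterMeasure O).toReal := by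
      intro f
      have : (fun j => S₁ (f j)) = (fun j => S₂ (f j)) := funext fun j => j.elim0
      rw [this]
    rw [Finset.sum_congr rfl fun f _ => hab f]
    have hSB : (0:ℝ) ≤ ∑ f : Fin 0 → Fin n, ((A fun j => S₂ (f j)).toOuterMeasure O).toReal :=
      Finset.sum_nonneg fun f _ => ENNReal.toReal_nonneg
    have hE : (1:ℝ) ≤ Real.exp (6 * ε * ((0:ℕ):ℝ) / (n:ℝ)) :=
      Real.one_le_exp (by positivity)
    have hδ' : (0:ℝ) ≤ (n:ℝ) ^ (0:ℕ) *
        (Real.exp (6 * ε * ((0:ℕ):ℝ) / (n:ℝ)) * (4 * ((0:ℕ):ℝ) / (n:ℝ)) * δ) := by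
      positivity
    nlinarith
  | succ m' =>
    -- basic quantities
    set c₁ : ℝ := (n:ℝ) - 1 with hc₁
    have hc₁p : (0:ℝ) < c₁ := by simp only [hc₁]; linarith
    set xp : ℝ := Real.exp ε with hxp
    set xm : ℝ := Real.exp (-ε) with hxm
    have hxpp : (0:ℝ) < xp := Real.exp_pos ε
    have hxmp : (0:ℝ) < xm := Real.exp_pos (-ε)
    have hxm1 : xm ≤ 1 := by
      rw [hxm, ← Real.exp_zero]; exact Real.exp_le_exp.2 (by linarith)
    have hxx1 : xp * xm = 1 := by rw [hxp, hxm, ← Real.exp_add]; simp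
    set a : (Fin (m' + 1) → Fin n) → ℝ :=
      fun f => ((A fun j => S₁ (f j)).toOuterMeasure O).toReal with ha
    set b : (Fin (m' + 1) → Fin n) → ℝ :=
      fun f => ((A fun j => S₂ (f j)).toOuterMeasure O).toReal with hb
    set SA : ℝ := ∑ f : Fin (m' + 1) → Fin n, a f with hSA
    set SB : ℝ := ∑ f : Fin (m' + 1) → Fin n, b f with hSB
    have hSBnn : 0 ≤ SB := Finset.sum_nonneg fun f _ => ENNReal.toReal_nonneg
    -- the coupling type
    set ν := {v : Fin n // v ≠ i}
    set out : Fin n × ν → Fin n := fun u => if u.1 = i then (u.2 : Fin n) else u.1 with hout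
    have hcardν : ((Fintype.card ν : ℕ) : ℝ) = c₁ := by
      have h1 : Fintype.card ν = n - 1 := by
        simp [ν, Fintype.card_subtype_compl, Fintype.card_fin]
      rw [h1, Nat.cast_sub (by omega)]
      simp [hc₁]
    have hsub : ∀ G : Fin n → ℝ,
        ∑ u₂ : ν, G (u₂ : Fin n) = ∑ v' ∈ Finset.univ.erase i, G v' :=
      fun G => (Finset.sum_subtype (Finset.univ.erase i) (fun x => by simp) G).symm
    -- single coordinate sums
    have hU3 : ∀ v : Fin n, ∑ u : Fin n × ν, (if u.1 = v then (1:ℝ) else 0) = c₁ := by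
      intro v
      rw [Fintype.sum_prod_type]
      have : ∀ v₁ : Fin n, ∑ u₂ : ν, (if v₁ = v then (1:ℝ) else 0)
          = (if v₁ = v then c₁ else 0) := by
        intro v₁
        rw [Finset.sum_const, nsmul_eq_mul, Finset.card_univ, hcardν]
        split_ifs <;> ring
      rw [Finset.sum_congr rfl fun v₁ _ => this v₁, Finset.sum_ite_eq']
      simp
    have hU1 : ∀ x : ℝ, ∑ u : Fin n × ν, (if u.1 = i then x else 0) = c₁ * x := by
      intro x
      rw [Fintype.sum_prod_type]
      have : ∀ v₁ : Fin n, ∑ u₂ : ν, (if v₁ = i then x else 0)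
          = (if v₁ = i then c₁ * x else 0) := by
        intro v₁
        rw [Finset.sum_const, nsmul_eq_mul, Finset.card_univ, hcardν]
        split_ifs <;> ring
      rw [Finset.sum_congr rfl fun v₁ _ => this v₁, Finset.sum_ite_eq']
      simp
    have hU2 : ∀ x : ℝ, ∑ u : Fin n × ν, (if u.1 = i then x else 1) = c₁ * (x + c₁) := by
      intro x
      rw [Fintype.sum_prod_type]
      have h1 : ∀ v₁ : Fin n, ∑ u₂ : ν, (if v₁ = i then x else 1)
          = c₁ * (if v₁ = i then x else 1) := by
        intro v₁
        rw [Finset.sum_const, nsmul_eq_mul, Finset.card_univ, hcardν]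
      rw [Finset.sum_congr rfl fun v₁ _ => h1 v₁, ← Finset.mul_sum]
      congr 1
      rw [← Finset.sum_erase_add Finset.univ _ (Finset.mem_univ i), if_pos rfl]
      rw [Finset.sum_congr rfl fun v₁ hv₁ => if_neg (Finset.mem_erase.1 hv₁).1]
      rw [Finset.sum_const, nsmul_eq_mul, mul_one]
      have : ((Finset.univ.erase i).card : ℝ) = c₁ := by
        rw [Finset.card_erase_of_mem (Finset.mem_univ i)]
        simp [hc₁, Nat.cast_sub (by omega : 1 ≤ n)]
      rw [this]; ring
    have hU4 : ∀ (x : ℝ) (v : Fin n),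
        ∑ u : Fin n × ν, (if out u = v then (if u.1 = i then x else 1) else 0)
          = (if v = i then 0 else x + c₁) := by
      intro x v
      rw [Fintype.sum_prod_type]
      have inner : ∀ v₁ : Fin n,
          (∑ u₂ : ν, if out (v₁, u₂) = v then (if v₁ = i then x else 1) else 0)
          = if v₁ = i then (if v = i then 0 else x)
            else (if v₁ = v then c₁ else 0) := by
        intro v₁
        by_cases hv₁ : v₁ = i
        · rw [if_pos hv₁]
          have e : ∀ u₂ : ν, (if out (v₁, u₂) = v then x else 0)
              = (if (u₂ : Fin n) = v then x else 0) := by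
            intro u₂
            have ho : out (v₁, u₂) = (u₂ : Fin n) := by rw [hout]; simp [hv₁]
            rw [ho]
          rw [Finset.sum_congr rfl fun u₂ _ => e u₂]
          rw [hsub (fun v' => if v' = v then x else 0)]
          rw [Finset.sum_ite_eq']
          by_cases hvi : v = i
          · simp [Finset.mem_erase, hvi, hv₁]
          · simp [Finset.mem_erase, hvi, hv₁]
        · rw [if_neg hv₁]
          have e : ∀ u₂ : ν, (if out (v₁, u₂) = v then (1:ℝ) else 0)
              = (if v₁ = v then (1:ℝ) else 0) := by
            intro u₂
            have ho : out (v₁, u₂) = v₁ := by rw [hout]; simp [hv₁]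
            rw [ho]
          rw [Finset.sum_congr rfl fun u₂ _ => e u₂]
          rw [Finset.sum_const, nsmul_eq_mul, Finset.card_univ, hcardν]
          simp [hv₁]
      rw [Finset.sum_congr rfl fun v₁ _ => inner v₁]
      rw [← Finset.sum_erase_add Finset.univ _ (Finset.mem_univ i), if_pos rfl]
      rw [Finset.sum_congr rfl fun v₁ hv₁ => if_neg (Finset.mem_erase.1 hv₁).1]
      rw [Finset.sum_ite_eq']
      by_cases hvi : v = i
      · simp [Finset.mem_erase, hvi]
      · simp [Finset.mem_erase, hvi]
        ring
    -- k and pow facts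
    set kq : (Fin (m' + 1) → (Fin n × ν)) → ℕ :=
      fun q => (Finset.univ.filter fun j => (q j).1 = i).card with hkq
    have hpowk : ∀ (x : ℝ) (q : Fin (m' + 1) → (Fin n × ν)),
        (∏ j, if (q j).1 = i then x else 1) = x ^ kq q := by
      intro x q
      rw [← Finset.prod_filter_mul_prod_filter_not Finset.univ (fun j => (q j).1 = i)]
      rw [Finset.prod_congr rfl fun j hj => if_pos (Finset.mem_filter.1 hj).2,
          Finset.prod_congr rfl fun j hj => if_neg (Finset.mem_filter.1 hj).2,
          Finset.prod_const, Finset.prod_const_one, mul_one]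
    have hkcast : ∀ q : Fin (m' + 1) → (Fin n × ν),
        ((kq q : ℕ) : ℝ) = ∑ j, (if (q j).1 = i then (1:ℝ) else 0) := by
      intro q
      rw [hkq]
      simp only [Finset.card_filter]
      push_cast
      exact Finset.sum_congr rfl fun j _ => by split_ifs <;> simp
    -- the five sum evaluations
    have hE1 : ∀ c : (Fin (m' + 1) → Fin n) → ℝ,
        ∑ q : Fin (m' + 1) → (Fin n × ν), c (fun j => (q j).1) = c₁ ^ (m' + 1) * ∑ g, c g := by
      intro c
      have h := master (Prod.fst : Fin n × ν → Fin n) (m' + 1) (fun _ _ => (1:ℝ)) c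
      simp only [Finset.prod_const_one, one_mul] at h
      rw [h]
      rw [Finset.sum_congr rfl fun g _ => ?_, ← Finset.mul_sum]
      rw [Finset.prod_congr rfl fun j _ => hU3 (g j), Finset.prod_const]
      simp
    set χ : (Fin (m' + 1) → Fin n) → ℝ :=
      fun g => ∏ j, (if g j = i then (0:ℝ) else 1) with hχ
    set G : ℝ := ∑ g, χ g * b g with hG
    have hGnn : 0 ≤ G := Finset.sum_nonneg fun g _ =>
      mul_nonneg (Finset.prod_nonneg fun j _ => by positivity) ENNReal.toReal_nonneg
    have hE2 : ∀ x : ℝ,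
        ∑ q : Fin (m' + 1) → (Fin n × ν), x ^ kq q * b (fun j => out (q j))
          = (x + c₁) ^ (m' + 1) * G := by
      intro x
      have h := master out (m' + 1) (fun _ u => if u.1 = i then x else 1) b
      calc ∑ q : Fin (m' + 1) → (Fin n × ν), x ^ kq q * b (fun j => out (q j))
          = ∑ q : Fin (m' + 1) → (Fin n × ν), (∏ j, if (q j).1 = i then x else 1) * b (fun j => out (q j)) :=
            Finset.sum_congr rfl fun q _ => by rw [hpowk x q]
        _ = ∑ g, (∏ j, ∑ u : Fin n × ν, if out u = g j then (if u.1 = i then x else 1) else 0) * b g := h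
        _ = ∑ g, ((x + c₁) ^ (m' + 1) * χ g) * b g := by
            refine Finset.sum_congr rfl fun g _ => ?_
            congr 1
            rw [Finset.prod_congr rfl fun j _ => hU4 x (g j)]
            have : ∀ j : Fin (m' + 1), (if g j = i then (0:ℝ) else x + c₁)
                = (x + c₁) * (if g j = i then (0:ℝ) else 1) := by
              intro j; split_ifs <;> ring
            rw [Finset.prod_congr rfl fun j _ => this j, Finset.prod_mul_distrib,
              Finset.prod_const, hχ]
            simp
        _ = (x + c₁) ^ (m' + 1) * G := by
            rw [hG, Finset.mul_sum]
            exact Finset.sum_congr rfl fun g _ => by ring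
    have hE3 : ∀ x : ℝ,
        ∑ q : Fin (m' + 1) → (Fin n × ν), ((kq q : ℕ) : ℝ) * x ^ kq q
          = ((m' + 1 : ℕ):ℝ) * (c₁ * x) * (c₁ * (x + c₁)) ^ m' := by
      intro x
      have hpt : ∀ (q : Fin (m' + 1) → (Fin n × ν)) (j : Fin (m' + 1)),
          (if (q j).1 = i then (1:ℝ) else 0) * (∏ j', if (q j').1 = i then x else 1)
          = ∏ j', (if j' = j then (if (q j').1 = i then x else 0)
              else (if (q j').1 = i then x else 1)) := by
        intro q j
        conv_rhs => rw [← Finset.mul_prod_erase Finset.univ _ (Finset.mem_univ j)]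
        rw [if_pos rfl]
        rw [Finset.prod_congr rfl fun j' hj' => if_neg (Finset.mem_erase.1 hj').1]
        conv_lhs => rw [← Finset.mul_prod_erase Finset.univ
          (fun j' : Fin (m' + 1) => if (q j').1 = i then x else 1) (Finset.mem_univ j)]
        by_cases hqj : (q j).1 = i
        · rw [if_pos hqj, if_pos hqj, if_pos hqj]; ring
        · rw [if_neg hqj, if_neg hqj, if_neg hqj]; ring
      calc ∑ q : Fin (m' + 1) → (Fin n × ν), ((kq q : ℕ) : ℝ) * x ^ kq q
          = ∑ q : Fin (m' + 1) → (Fin n × ν), ∑ j, ∏ j', (if j' = j then (if (q j').1 = i then x else 0)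
              else (if (q j').1 = i then x else 1)) := by
            refine Finset.sum_congr rfl fun q _ => ?_
            rw [hkcast q, ← hpowk x q, Finset.sum_mul]
            exact Finset.sum_congr rfl fun j _ => hpt q j
        _ = ∑ j : Fin (m' + 1), ∑ q : Fin (m' + 1) → (Fin n × ν), ∏ j', (if j' = j then (if (q j').1 = i then x else 0)
              else (if (q j').1 = i then x else 1)) := Finset.sum_comm
        _ = ∑ j : Fin (m' + 1), ∏ j' : Fin (m' + 1), ∑ u : Fin n × ν, (if j' = j then (if u.1 = i then x else 0)
              else (if u.1 = i then x else 1)) := by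
            refine Finset.sum_congr rfl fun j _ => ?_
            exact sum_prod_fn (m' + 1) (fun (j' : Fin (m' + 1)) (u : Fin n × ν) =>
              if j' = j then (if u.1 = i then x else 0) else (if u.1 = i then x else 1))
        _ = ∑ j : Fin (m' + 1), ∏ j' : Fin (m' + 1), (if j' = j then c₁ * x else c₁ * (x + c₁)) := by
            refine Finset.sum_congr rfl fun j _ => Finset.prod_congr rfl fun j' _ => ?_
            by_cases hjj : j' = j
            · simp only [if_pos hjj]; exact hU1 x
            · simp only [if_neg hjj]; exact hU2 x
        _ = ∑ j : Fin (m' + 1), (c₁ * x) * (c₁ * (x + c₁)) ^ m' := by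
            refine Finset.sum_congr rfl fun j _ => ?_
            rw [← Finset.mul_prod_erase Finset.univ _ (Finset.mem_univ j), if_pos rfl]
            rw [Finset.prod_congr rfl fun j' hj' => if_neg (Finset.mem_erase.1 hj').1]
            rw [Finset.prod_const, Finset.card_erase_of_mem (Finset.mem_univ j)]
            simp
        _ = ((m' + 1 : ℕ):ℝ) * (c₁ * x) * (c₁ * (x + c₁)) ^ m' := by
            rw [Finset.sum_const, nsmul_eq_mul]
            simp; ring
    -- pointwise group privacy inequalities
    have hDprop : ∀ q : Fin (m' + 1) → (Fin n × ν), ∀ j, j ∉ (Finset.univ.filter fun j => (q j).1 = i) →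
        (q j).1 ≠ i ∧ out (q j) = (q j).1 := by
      intro q j hj
      have : ¬(q j).1 = i := by
        intro hc; exact hj (Finset.mem_filter.2 ⟨Finset.mem_univ j, hc⟩)
      exact ⟨this, if_neg this⟩
    have hI : ∀ q : Fin (m' + 1) → (Fin n × ν),
        a (fun j => (q j).1) ≤ xp ^ kq q * b (fun j => out (q j))
          + ((kq q : ℕ) : ℝ) * xp ^ kq q * xm * δ := by
      intro q
      exact group_dp (A := A) hε0 hδ hA O (kq q) (fun j => S₁ ((q j).1))
        (fun j => S₂ (out (q j)))
        ⟨Finset.univ.filter fun j => (q j).1 = i, le_refl _, fun j hj => by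
          obtain ⟨h1, h2⟩ := hDprop q j hj
          show S₁ ((q j).1) = S₂ (out (q j))
          rw [h2]; exact hrest _ h1⟩
    have hII₀ : ∀ q : Fin (m' + 1) → (Fin n × ν),
        b (fun j => out (q j)) ≤ xp ^ kq q * b (fun j => (q j).1)
          + ((kq q : ℕ) : ℝ) * xp ^ kq q * xm * δ := by
      intro q
      exact group_dp (A := A) hε0 hδ hA O (kq q) (fun j => S₂ (out (q j)))
        (fun j => S₂ ((q j).1))
        ⟨Finset.univ.filter fun j => (q j).1 = i, le_refl _, fun j hj => by
          obtain ⟨h1, h2⟩ := hDprop q j hj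
          show S₂ (out (q j)) = S₂ ((q j).1)
          rw [h2]⟩
    have hxxk : ∀ k : ℕ, xm ^ k * xp ^ k = 1 := by
      intro k
      rw [← mul_pow, mul_comm, hxx1, one_pow]
    have hII : ∀ q : Fin (m' + 1) → (Fin n × ν),
        xm ^ kq q * b (fun j => out (q j)) ≤ b (fun j => (q j).1)
          + ((kq q : ℕ) : ℝ) * xm * δ := by
      intro q
      have h0 := hII₀ q
      have h1 := mul_le_mul_of_nonneg_left h0 (pow_nonneg hxmp.le (kq q))
      calc xm ^ kq q * b (fun j => out (q j))
          ≤ xm ^ kq q * (xp ^ kq q * b (fun j => (q j).1)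
            + ((kq q : ℕ) : ℝ) * xp ^ kq q * xm * δ) := h1
        _ = (xm ^ kq q * xp ^ kq q) * b (fun j => (q j).1)
            + ((kq q : ℕ) : ℝ) * (xm ^ kq q * xp ^ kq q) * xm * δ := by ring
        _ = b (fun j => (q j).1) + ((kq q : ℕ) : ℝ) * xm * δ := by
            rw [hxxk (kq q)]; ring
    -- summed inequalities
    have hIS1 : c₁ ^ (m' + 1) * SA ≤ (xp + c₁) ^ (m' + 1) * G
        + (((m' + 1 : ℕ):ℝ) * (c₁ * xp) * (c₁ * (xp + c₁)) ^ m') * (xm * δ) := by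
      have hsum := Finset.sum_le_sum (fun q (_ : q ∈ Finset.univ) => hI q)
      rw [hE1 a] at hsum
      rw [Finset.sum_add_distrib] at hsum
      rw [hE2 xp] at hsum
      have : ∑ q : Fin (m' + 1) → (Fin n × ν), ((kq q : ℕ) : ℝ) * xp ^ kq q * xm * δ
          = (((m' + 1 : ℕ):ℝ) * (c₁ * xp) * (c₁ * (xp + c₁)) ^ m') * (xm * δ) := by
        rw [← hE3 xp, Finset.sum_mul]
        exact Finset.sum_congr rfl fun q _ => by ring
      rw [this] at hsum
      exact hsum
    have hIS2 : (xm + c₁) ^ (m' + 1) * G ≤ c₁ ^ (m' + 1) * SB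
        + (((m' + 1 : ℕ):ℝ) * (c₁ * 1) * (c₁ * (1 + c₁)) ^ m') * (xm * δ) := by
      have hsum := Finset.sum_le_sum (fun q (_ : q ∈ Finset.univ) => hII q)
      rw [Finset.sum_add_distrib] at hsum
      have e1 : ∑ q : Fin (m' + 1) → (Fin n × ν), xm ^ kq q * b (fun j => out (q j)) = (xm + c₁) ^ (m' + 1) * G :=
        hE2 xm
      have e2 : ∑ q : Fin (m' + 1) → (Fin n × ν), b (fun j => (q j).1) = c₁ ^ (m' + 1) * SB := hE1 b
      have e3 : ∑ q : Fin (m' + 1) → (Fin n × ν), ((kq q : ℕ) : ℝ) * xm * δ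
          = (((m' + 1 : ℕ):ℝ) * (c₁ * 1) * (c₁ * (1 + c₁)) ^ m') * (xm * δ) := by
        have h1 : ∑ q : Fin (m' + 1) → (Fin n × ν), ((kq q : ℕ) : ℝ) * xm * δ
            = (∑ q : Fin (m' + 1) → (Fin n × ν), ((kq q : ℕ) : ℝ) * (1:ℝ) ^ kq q) * (xm * δ) := by
          rw [Finset.sum_mul]
          exact Finset.sum_congr rfl fun q _ => by rw [one_pow]; ring
        rw [h1, hE3 1]
      rw [e1, e2, e3] at hsum
      exact hsum
    -- clean forms
    set Pp : ℝ := xp + c₁ with hPp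
    set Pm : ℝ := xm + c₁ with hPm
    have hPpp : (0:ℝ) < Pp := by rw [hPp]; linarith
    have hPmp : (0:ℝ) < Pm := by rw [hPm]; linarith
    have hIS1' : c₁ ^ (m' + 1) * SA ≤ Pp ^ (m' + 1) * G + ((m' + 1 : ℕ):ℝ) * c₁ ^ (m' + 1) * Pp ^ m' * δ := by
      have e : (((m' + 1 : ℕ):ℝ) * (c₁ * xp) * (c₁ * (xp + c₁)) ^ m') * (xm * δ)
          = (xp * xm) * (((m' + 1 : ℕ):ℝ) * (c₁ ^ (m' + 1)) * (xp + c₁) ^ m' * δ) := by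
        rw [mul_pow]; ring
      rw [e, hxx1, one_mul] at hIS1
      exact hIS1
    have hIS2' : Pm ^ (m' + 1) * G ≤ c₁ ^ (m' + 1) * SB + ((m' + 1 : ℕ):ℝ) * c₁ ^ (m' + 1) * (n:ℝ) ^ m' * xm * δ := by
      have e : (((m' + 1 : ℕ):ℝ) * (c₁ * 1) * (c₁ * (1 + c₁)) ^ m') * (xm * δ)
          = ((m' + 1 : ℕ):ℝ) * c₁ ^ (m' + 1) * (1 + c₁) ^ m' * xm * δ := by
        rw [mul_pow]; ring
      have e2 : (1 + c₁ : ℝ) = (n:ℝ) := by rw [hc₁]; ring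
      rw [e, e2] at hIS2
      exact hIS2
    -- combine
    have hmain : Pm ^ (m' + 1) * SA ≤ Pp ^ (m' + 1) * SB + ((m' + 1 : ℕ):ℝ) * (n:ℝ) ^ m' * xm * δ * Pp ^ (m' + 1)
        + ((m' + 1 : ℕ):ℝ) * Pp ^ m' * Pm ^ (m' + 1) * δ := by
      have step1 := mul_le_mul_of_nonneg_left hIS1' (pow_nonneg hPmp.le (m' + 1))
      have step2 := mul_le_mul_of_nonneg_left hIS2' (pow_nonneg hPpp.le (m' + 1))
      have hcM : (0:ℝ) < c₁ ^ (m' + 1) := pow_pos hc₁p (m' + 1)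
      have : c₁ ^ (m' + 1) * (Pm ^ (m' + 1) * SA) ≤ c₁ ^ (m' + 1) * (Pp ^ (m' + 1) * SB
          + ((m' + 1 : ℕ):ℝ) * (n:ℝ) ^ m' * xm * δ * Pp ^ (m' + 1) + ((m' + 1 : ℕ):ℝ) * Pp ^ m' * Pm ^ (m' + 1) * δ) := by
        nlinarith [step1, step2]
      exact le_of_mul_le_mul_left this hcM
    -- analytic bounds
    set E : ℝ := Real.exp (6 * ε * ((m' + 1 : ℕ):ℝ) / (n:ℝ)) with hE
    have hK1 : Pp ^ (m' + 1) ≤ E * Pm ^ (m' + 1) := by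
      have h1 : Pp ≤ Real.exp (6 * ε / n) * Pm := by
        rw [hPp, hPm, hc₁]
        exact an1 hε0 hε1 hnR
      have h2 := pow_le_pow_left₀ hPpp.le h1 (m' + 1)
      rw [mul_pow, ← Real.exp_nat_mul] at h2
      have hEeq : Real.exp (((m' + 1 : ℕ):ℝ) * (6 * ε / n)) = E := by
        rw [hE]; congr 1; push_cast; ring
      rw [hEeq] at h2
      exact h2
    have hK3 : Pp ^ m' ≤ E * (n:ℝ) ^ m' := by
      have h1 : Pp ≤ (n:ℝ) * Real.exp (6 * ε / n) := by
        rw [hPp, hc₁]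
        exact an2 hε0 hε1 hnR
      have h2 := pow_le_pow_left₀ hPpp.le h1 m'
      rw [mul_pow, ← Real.exp_nat_mul] at h2
      have h3 : Real.exp (((m' : ℕ):ℝ) * (6 * ε / n)) ≤ E := by
        rw [hE]
        refine Real.exp_le_exp.2 ?_
        have e : ((m' : ℕ):ℝ) * (6 * ε / n) = 6 * ε * (m':ℝ) / n := by ring
        rw [e]
        have hnum : 6 * ε * (m':ℝ) ≤ 6 * ε * ((m' + 1 : ℕ):ℝ) := by
          push_cast; nlinarith
        gcongr
      calc Pp ^ m' ≤ (n:ℝ) ^ m' * Real.exp (((m' : ℕ):ℝ) * (6 * ε / n)) := h2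
        _ ≤ (n:ℝ) ^ m' * E := mul_le_mul_of_nonneg_left h3 (by positivity)
        _ = E * (n:ℝ) ^ m' := by ring
    -- final
    have hEp : (0:ℝ) < E := Real.exp_pos _
    have hNδ : (n:ℝ) ^ (m' + 1) * (E * (4 * ((m' + 1 : ℕ):ℝ) / (n:ℝ)) * δ)
        = 4 * ((m' + 1 : ℕ):ℝ) * δ * E * (n:ℝ) ^ m' := by
      rw [pow_succ]
      field_simp
    have hfinal : Pm ^ (m' + 1) * SA ≤ Pm ^ (m' + 1) * (E * SB
        + 4 * ((m' + 1 : ℕ):ℝ) * δ * E * (n:ℝ) ^ m') := by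
      have t1 : Pp ^ (m' + 1) * SB ≤ E * Pm ^ (m' + 1) * SB :=
        mul_le_mul_of_nonneg_right hK1 hSBnn
      have t2 : ((m' + 1 : ℕ):ℝ) * (n:ℝ) ^ m' * xm * δ * Pp ^ (m' + 1)
          ≤ ((m' + 1 : ℕ):ℝ) * (n:ℝ) ^ m' * δ * (E * Pm ^ (m' + 1)) := by
        have h1 : xm * Pp ^ (m' + 1) ≤ 1 * (E * Pm ^ (m' + 1)) := by
          have := mul_le_mul_of_nonneg_left hK1 hxmp.le
          nlinarith [pow_pos hPpp (m' + 1), pow_pos hPmp (m' + 1)]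
        have h2 : (0:ℝ) ≤ ((m' + 1 : ℕ):ℝ) * (n:ℝ) ^ m' * δ := by positivity
        nlinarith [mul_le_mul_of_nonneg_left h1 h2]
      have t3 : ((m' + 1 : ℕ):ℝ) * Pp ^ m' * Pm ^ (m' + 1) * δ
          ≤ ((m' + 1 : ℕ):ℝ) * (E * (n:ℝ) ^ m') * Pm ^ (m' + 1) * δ := by
        have h2 : (0:ℝ) ≤ ((m' + 1 : ℕ):ℝ) * Pm ^ (m' + 1) * δ := by positivity
        nlinarith [mul_le_mul_of_nonneg_left hK3 h2]
      nlinarith [hmain, t1, t2, t3, pow_pos hPmp (m' + 1), mul_nonneg (mul_nonneg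
        (by positivity : (0:ℝ) ≤ ((m' + 1 : ℕ):ℝ) * E) (by positivity : (0:ℝ) ≤ (n:ℝ) ^ m'))
        (mul_nonneg (pow_pos hPmp (m' + 1)).le hδ)]
    have hfin2 : SA ≤ E * SB + 4 * ((m' + 1 : ℕ):ℝ) * δ * E * (n:ℝ) ^ m' :=
      le_of_mul_le_mul_left hfinal (pow_pos hPmp (m' + 1))
    rw [hNδ.symm] at hfin2
    exact hfin2


/-- Lemma 2.16, privacy amplification by subsampling. -/
theorem privacy_amplification_by_subsampling {X Ω : Type*} (ε δ : ℝ) (m n : ℕ)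
    (A : (Fin m → X × Bool) → PMF Ω)
    (hε0 : 0 ≤ ε) (hε : ε ≤ 1) (hδ : 0 ≤ δ)
    (hn : 2 ≤ n) (hmn : 6 * ε * (m : ℝ) / (n : ℝ) ≤ 1)
    (hA : IsDP A ε δ) :
    IsDP (fun S : Fin n → X × Bool =>
        (@PMF.uniformOfFintype (Fin m → Fin n) _ ⟨fun _ => ⟨0, by omega⟩⟩).bind
          fun f => A fun i => S (f i))
      (6 * ε * (m : ℝ) / (n : ℝ))
      (Real.exp (6 * ε * (m : ℝ) / (n : ℝ)) * (4 * (m : ℝ) / (n : ℝ)) * δ) := by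
  intro S₁ S₂ hnb O
  obtain ⟨i, hi, hrest⟩ := hnb
  have key := core A hε0 hε hδ hn hA S₁ S₂ i hrest O
  set ε' : ℝ := 6 * ε * (m : ℝ) / (n : ℝ) with hε'
  set δ' : ℝ := Real.exp ε' * (4 * (m : ℝ) / (n : ℝ)) * δ with hδ'
  have hδ'0 : 0 ≤ δ' := by
    rw [hδ']
    positivity
  simp only []
  have hbind : ∀ S : Fin n → X × Bool,
      ((@PMF.uniformOfFintype (Fin m → Fin n) _ ⟨fun _ => ⟨0, by omega⟩⟩).bind
        fun f => A fun i => S (f i)).toOuterMeasure O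
      = ∑ f : Fin m → Fin n, ((Fintype.card (Fin m → Fin n) : ℝ≥0∞))⁻¹ *
          (A fun j => S (f j)).toOuterMeasure O := by
    intro S
    rw [PMF.toOuterMeasure_bind_apply, tsum_fintype]
    exact Finset.sum_congr rfl fun f _ => by
      rw [@PMF.uniformOfFintype_apply (Fin m → Fin n) _ ⟨fun _ => ⟨0, by omega⟩⟩ f]
  rw [hbind S₁, hbind S₂]
  have hcard : (Fintype.card (Fin m → Fin n) : ℝ≥0∞) = ENNReal.ofReal ((n:ℝ)^m) := by
    rw [Fintype.card_fun, Fintype.card_fin, Fintype.card_fin]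
    rw [show ((n:ℝ)^m) = ((n^m : ℕ) : ℝ) by push_cast; ring, ENNReal.ofReal_natCast]
  have hcne0 : (Fintype.card (Fin m → Fin n) : ℝ≥0∞) ≠ 0 := by
    simp only [Ne, Nat.cast_eq_zero, Fintype.card_fun, Fintype.card_fin]
    positivity
  have hcnetop : (Fintype.card (Fin m → Fin n) : ℝ≥0∞) ≠ ⊤ := ENNReal.natCast_ne_top _
  have hsum : ∀ S : Fin n → X × Bool,
      ∑ f : Fin m → Fin n, ((Fintype.card (Fin m → Fin n) : ℝ≥0∞))⁻¹ *
        (A fun j => S (f j)).toOuterMeasure O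
      = ((Fintype.card (Fin m → Fin n) : ℝ≥0∞))⁻¹ *
          ENNReal.ofReal (∑ f : Fin m → Fin n, ((A fun j => S (f j)).toOuterMeasure O).toReal) := by
    intro S
    rw [← Finset.mul_sum]
    congr 1
    rw [ENNReal.ofReal_sum_of_nonneg (fun f _ => ENNReal.toReal_nonneg)]
    exact Finset.sum_congr rfl fun f _ => (ENNReal.ofReal_toReal (pmf_om_ne_top _ _)).symm
  rw [hsum S₁, hsum S₂]
  set c := ((Fintype.card (Fin m → Fin n) : ℝ≥0∞))⁻¹ with hc
  set SA := ∑ f : Fin m → Fin n, ((A fun j => S₁ (f j)).toOuterMeasure O).toReal with hSA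
  set SB := ∑ f : Fin m → Fin n, ((A fun j => S₂ (f j)).toOuterMeasure O).toReal with hSB
  calc c * ENNReal.ofReal SA
      ≤ c * ENNReal.ofReal (Real.exp ε' * SB + (n:ℝ)^m * δ') :=
        mul_le_mul_right (ENNReal.ofReal_le_ofReal key) c
    _ ≤ c * (ENNReal.ofReal (Real.exp ε' * SB) + ENNReal.ofReal ((n:ℝ)^m * δ')) :=
        mul_le_mul_right ENNReal.ofReal_add_le c
    _ = ENNReal.ofReal (Real.exp ε') * (c * ENNReal.ofReal SB)
        + (c * ENNReal.ofReal ((n:ℝ)^m)) * ENNReal.ofReal δ' := by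
        rw [ENNReal.ofReal_mul (Real.exp_pos _).le, ENNReal.ofReal_mul (by positivity)]
        ring
    _ = ENNReal.ofReal (Real.exp ε') * (c * ENNReal.ofReal SB) + ENNReal.ofReal δ' := by
        rw [hc, ← hcard, ENNReal.inv_mul_cancel hcne0 hcnetop, one_mul]
end

section
/- Let H be a finite set and q a score function of sensitivity Δ on datasets of size n. The exponential mechanism, which on input S outputs h∈H with probability exp(−ε·q(S,h)/(2Δ)) / Σ_{f∈H} exp(−ε·q(S,f)/(2Δ)), is ε-differentially private; moreover, for every dataset S and every β∈(0,1), with probability at least 1−β it outputs an h with q(S,h) ≤ min_{f∈H} q(S,f) + (2Δ/ε)·ln(|H|/β). -/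
open MeasureTheory
open scoped ENNReal

open Classical in
lemma expMech_measure_eq {H : Type*} [Fintype H] [Nonempty H] (score : H → ℝ) (O : Set H) :
    (expMech score).toOuterMeasure O =
      ENNReal.ofReal ((∑ h ∈ Finset.univ.filter (· ∈ O), Real.exp (score h)) /
        ∑ f, Real.exp (score f)) := by
  have hZ : (0:ℝ) < ∑ f, Real.exp (score f) :=
    Finset.sum_pos (fun f _ => Real.exp_pos _) Finset.univ_nonempty
  have hsum : (∑ f, ENNReal.ofReal (Real.exp (score f))) =
      ENNReal.ofReal (∑ f, Real.exp (score f)) :=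
    (ENNReal.ofReal_sum_of_nonneg fun i _ => (Real.exp_pos _).le).symm
  have happ : ∀ h : H, expMech score h =
      ENNReal.ofReal (Real.exp (score h) / ∑ f, Real.exp (score f)) := by
    intro h
    show ENNReal.ofReal (Real.exp (score h)) / _ = _
    rw [hsum, ← ENNReal.ofReal_div_of_pos hZ]
  rw [PMF.toOuterMeasure_apply, tsum_fintype]
  calc ∑ h, O.indicator (expMech score) h
      = ∑ h ∈ Finset.univ.filter (· ∈ O), expMech score h := by
        rw [Finset.sum_filter]
        exact Finset.sum_congr rfl fun h _ => by
          by_cases hh : h ∈ O <;> simp [Set.indicator, hh]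
    _ = ∑ h ∈ Finset.univ.filter (· ∈ O),
          ENNReal.ofReal (Real.exp (score h) / ∑ f, Real.exp (score f)) :=
        Finset.sum_congr rfl fun h _ => happ h
    _ = ENNReal.ofReal ((∑ h ∈ Finset.univ.filter (· ∈ O), Real.exp (score h)) /
          ∑ f, Real.exp (score f)) := by
        rw [Finset.sum_div, ENNReal.ofReal_sum_of_nonneg]
        intro i _
        positivity

/-- Lemma 2.12, properties of the exponential mechanism. -/
theorem exponential_mechanism_properties {X H : Type*} [Fintype H] [Nonempty H] (n : ℕ)
    (q : (Fin n → X × Bool) → H → ℝ) (Δ ε : ℝ) (hΔ : 0 < Δ) (hε : 0 < ε)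
    (hsens : ∀ S₁ S₂ : Fin n → X × Bool, Neighboring S₁ S₂ → ∀ h, |q S₁ h - q S₂ h| ≤ Δ) :
    IsDP (fun S => expMech fun h => -(ε * q S h) / (2 * Δ)) ε 0 ∧
    ∀ (S : Fin n → X × Bool) (β : ℝ), 0 < β → β < 1 →
      ENNReal.ofReal (1 - β) ≤
        (expMech fun h => -(ε * q S h) / (2 * Δ)).toOuterMeasure
          {h | q S h ≤ (⨅ f, q S f) + (2 * Δ / ε) * Real.log ((Fintype.card H : ℝ) / β)} := by
  classical
  have h2Δ : (0:ℝ) < 2 * Δ := by linarith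
  have hZpos : ∀ S : Fin n → X × Bool,
      (0:ℝ) < ∑ f, Real.exp (-(ε * q S f) / (2 * Δ)) :=
    fun S => Finset.sum_pos (fun f _ => Real.exp_pos _) Finset.univ_nonempty
  constructor
  · intro S₁ S₂ hN O
    simp only
    rw [expMech_measure_eq, expMech_measure_eq]
    have hpt : ∀ (T₁ T₂ : Fin n → X × Bool), Neighboring T₁ T₂ → ∀ h : H,
        Real.exp (-(ε * q T₁ h) / (2 * Δ)) ≤
          Real.exp (ε / 2) * Real.exp (-(ε * q T₂ h) / (2 * Δ)) := by
      intro T₁ T₂ hTN h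
      rw [← Real.exp_add]
      apply Real.exp_le_exp.mpr
      have hd := abs_le.mp (hsens T₁ T₂ hTN h)
      have hnum : (0:ℝ) ≤ ε * Δ + ε * (q T₁ h - q T₂ h) := by
        nlinarith [mul_nonneg hε.le (by linarith [hd.1] : (0:ℝ) ≤ Δ + (q T₁ h - q T₂ h))]
      have key : ε / 2 + -(ε * q T₂ h) / (2 * Δ) - (-(ε * q T₁ h) / (2 * Δ))
          = (ε * Δ + ε * (q T₁ h - q T₂ h)) / (2 * Δ) := by
        field_simp
        ring
      linarith [key, div_nonneg hnum h2Δ.le]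
    have hN' : Neighboring S₂ S₁ := by
      obtain ⟨i, hi, hj⟩ := hN
      exact ⟨i, Ne.symm hi, fun j hji => (hj j hji).symm⟩
    set A := Real.exp (ε / 2) with hA
    have hApos : (0:ℝ) < A := Real.exp_pos _
    set N₁ := ∑ h ∈ Finset.univ.filter (· ∈ O), Real.exp (-(ε * q S₁ h) / (2 * Δ))
    set N₂ := ∑ h ∈ Finset.univ.filter (· ∈ O), Real.exp (-(ε * q S₂ h) / (2 * Δ))
    have hN₁ : N₁ ≤ A * N₂ := by
      rw [Finset.mul_sum]
      exact Finset.sum_le_sum fun h _ => hpt S₁ S₂ hN h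
    have hZ₂ : (∑ f, Real.exp (-(ε * q S₂ f) / (2 * Δ))) ≤
        A * ∑ f, Real.exp (-(ε * q S₁ f) / (2 * Δ)) := by
      rw [Finset.mul_sum]
      exact Finset.sum_le_sum fun h _ => hpt S₂ S₁ hN' h
    have hN₂nn : (0:ℝ) ≤ N₂ := Finset.sum_nonneg fun h _ => (Real.exp_pos _).le
    have hreal : N₁ / (∑ f, Real.exp (-(ε * q S₁ f) / (2 * Δ))) ≤
        Real.exp ε * (N₂ / ∑ f, Real.exp (-(ε * q S₂ f) / (2 * Δ))) := by
      rw [← mul_div_assoc, div_le_div_iff₀ (hZpos S₁) (hZpos S₂)]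
      have hexp : Real.exp ε = A * A := by
        rw [hA, ← Real.exp_add]; norm_num
      calc N₁ * ∑ f, Real.exp (-(ε * q S₂ f) / (2 * Δ))
          ≤ (A * N₂) * (A * ∑ f, Real.exp (-(ε * q S₁ f) / (2 * Δ))) :=
            mul_le_mul hN₁ hZ₂ (hZpos S₂).le (by positivity)
        _ = Real.exp ε * N₂ * ∑ f, Real.exp (-(ε * q S₁ f) / (2 * Δ)) := by
            rw [hexp]; ring
    calc ENNReal.ofReal (N₁ / ∑ f, Real.exp (-(ε * q S₁ f) / (2 * Δ)))
        ≤ ENNReal.ofReal (Real.exp ε *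
            (N₂ / ∑ f, Real.exp (-(ε * q S₂ f) / (2 * Δ)))) :=
          ENNReal.ofReal_le_ofReal hreal
      _ = ENNReal.ofReal (Real.exp ε) *
            ENNReal.ofReal (N₂ / ∑ f, Real.exp (-(ε * q S₂ f) / (2 * Δ))) :=
          ENNReal.ofReal_mul (Real.exp_pos _).le
      _ ≤ _ := by simp
  · intro S β hβ0 hβ1
    set c := (2 * Δ / ε) * Real.log ((Fintype.card H : ℝ) / β) with hc
    obtain ⟨f₀, hf₀⟩ := Finite.exists_min (q S)
    have hm : (⨅ f, q S f) = q S f₀ :=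
      le_antisymm (ciInf_le (Finite.bddBelow_range _) f₀) (le_ciInf hf₀)
    rw [expMech_measure_eq]
    set Z := ∑ f, Real.exp (-(ε * q S f) / (2 * Δ)) with hZdef
    have hZ : (0:ℝ) < Z := hZpos S
    have hcard1 : (1:ℝ) ≤ (Fintype.card H : ℝ) := by
      exact_mod_cast Fintype.card_pos
    have hx : (0:ℝ) < (Fintype.card H : ℝ) / β := by positivity
    have hexp2 : Real.exp (-(ε * c) / (2 * Δ)) = β / (Fintype.card H : ℝ) := by
      have hL : -(ε * c) / (2 * Δ) = - Real.log ((Fintype.card H : ℝ) / β) := by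
        rw [hc]
        field_simp
      rw [hL, Real.exp_neg, Real.exp_log hx, inv_div]
    set O : Set H := {h | q S h ≤ (⨅ f, q S f) + c} with hO
    have hbad : ∀ h : H, h ∉ O →
        Real.exp (-(ε * q S h) / (2 * Δ)) ≤
          Real.exp (-(ε * q S f₀) / (2 * Δ)) * (β / (Fintype.card H : ℝ)) := by
      intro h hh
      have hh' : q S f₀ + c < q S h := by
        rw [hO, Set.mem_setOf_eq, hm, not_le] at hh
        exact hh
      calc Real.exp (-(ε * q S h) / (2 * Δ))
          ≤ Real.exp (-(ε * (q S f₀ + c)) / (2 * Δ)) := by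
            apply Real.exp_le_exp.mpr
            rw [div_le_div_iff₀ h2Δ h2Δ]
            nlinarith [mul_nonneg (mul_nonneg hε.le h2Δ.le)
              (by linarith : (0:ℝ) ≤ q S h - (q S f₀ + c))]
        _ = Real.exp (-(ε * q S f₀) / (2 * Δ)) * (β / (Fintype.card H : ℝ)) := by
            rw [show -(ε * (q S f₀ + c)) / (2 * Δ) =
              -(ε * q S f₀) / (2 * Δ) + -(ε * c) / (2 * Δ) by ring,
              Real.exp_add, hexp2]
    set NG := ∑ h ∈ Finset.univ.filter (· ∈ O), Real.exp (-(ε * q S h) / (2 * Δ)) with hNG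
    set NB := ∑ h ∈ Finset.univ.filter (fun h => h ∉ O),
      Real.exp (-(ε * q S h) / (2 * Δ)) with hNB
    have hsplit : NG + NB = Z := by
      rw [hNG, hNB, hZdef]
      exact Finset.sum_filter_add_sum_filter_not _ _ _
    have hf₀Z : Real.exp (-(ε * q S f₀) / (2 * Δ)) ≤ Z :=
      Finset.single_le_sum (f := fun f => Real.exp (-(ε * q S f) / (2 * Δ)))
        (fun f _ => (Real.exp_pos _).le) (Finset.mem_univ f₀)
    have hNBle : NB ≤ β * Z := by
      calc NB ≤ ∑ _h ∈ Finset.univ.filter (fun h => h ∉ O),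
            Real.exp (-(ε * q S f₀) / (2 * Δ)) * (β / (Fintype.card H : ℝ)) :=
          Finset.sum_le_sum fun h hh => hbad h (Finset.mem_filter.mp hh).2
        _ = (Finset.univ.filter (fun h => h ∉ O)).card *
            (Real.exp (-(ε * q S f₀) / (2 * Δ)) * (β / (Fintype.card H : ℝ))) := by
          rw [Finset.sum_const, nsmul_eq_mul]
        _ ≤ (Fintype.card H : ℝ) *
            (Real.exp (-(ε * q S f₀) / (2 * Δ)) * (β / (Fintype.card H : ℝ))) := by
          apply mul_le_mul_of_nonneg_right _ (by positivity)
          exact_mod_cast Finset.card_filter_le _ _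
        _ = β * Real.exp (-(ε * q S f₀) / (2 * Δ)) := by
          field_simp
        _ ≤ β * Z := mul_le_mul_of_nonneg_left hf₀Z hβ0.le
    apply ENNReal.ofReal_le_ofReal
    rw [le_div_iff₀ hZ]
    nlinarith
end

section
/- Let D be a distribution over X×{0,1} with marginal D_X, let T, W be datasets, let η = inf_{c∈C} err_D(c), and let H ⊆ C be a set containing, for every labeling of T_X realized by C, at least one concept consistent with that labeling. Suppose the following three conditions hold: (E₁) for every c∈C, |err_D(c) − err_W(c)| ≤ α/9; (E₂) h∈H satisfies q(T∘W,h) ≤ min_{f∈H} q(T∘W,f) + α/9, where q(T∘W,g) = min_{f∈C}( dis_{T_X}(g,f) + err_W(f) ), and this minimum over f∈C is attained; (E₃) for all h₁,h₂∈C with dis_{T_X}(h₁,h₂) ≤ α/3 it holds that dis_{D_X}(h₁,h₂) ≤ 2α/3. Then err_D(h) ≤ η + α. -/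
open MeasureTheory
open scoped ENNReal

set_option maxHeartbeats 1600000 in
/-- deterministic core of Claim 3.5: under events `E₁`, `E₂`, `E₃`,
the selected hypothesis has near-optimal generalization error. -/
theorem relabeling_error_bound {X : Type*} [MeasurableSpace X]
    (C : Set (X → Bool)) (hC : C.Nonempty)
    (D : Measure (X × Bool)) [IsProbabilityMeasure D] {t w : ℕ}
    (T : Fin t → X × Bool) (W : Fin w → X × Bool) (α : ℝ) (hα : 0 < α)
    (H : Set (X → Bool)) (hHC : H ⊆ C)
    (hcover : ∀ c ∈ C, ∃ h' ∈ H, ∀ i, h' (T i).1 = c (T i).1)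
    (h : X → Bool) (hh : h ∈ H)
    (hE1 : ∀ c ∈ C, |errD D c - errS W c| ≤ α / 9)
    (hE2 : qScore C T W h ≤ (⨅ f : H, qScore C T W (f : X → Bool)) + α / 9)
    (hattain : ∃ f ∈ C, qScore C T W h = disS (fun i => (T i).1) h f + errS W f)
    (hE3 : ∀ h₁ ∈ C, ∀ h₂ ∈ C, disS (fun i => (T i).1) h₁ h₂ ≤ α / 3 →
      disD (D.map Prod.fst) h₁ h₂ ≤ 2 * α / 3) :
    errD D h ≤ optErr C D + α := by
  classical
  obtain ⟨f, hfC, hq⟩ := hattain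
  haveI : Nonempty C := hC.to_subtype
  haveI : Nonempty H := ⟨⟨h, hh⟩⟩
  have herrS_nonneg : ∀ g : X → Bool, 0 ≤ errS W g := fun g =>
    div_nonneg (Nat.cast_nonneg _) (Nat.cast_nonneg _)
  have hdisS_nonneg : ∀ g₁ g₂ : X → Bool, 0 ≤ disS (fun i => (T i).1) g₁ g₂ := fun g₁ g₂ =>
    div_nonneg (Nat.cast_nonneg _) (Nat.cast_nonneg _)
  have herrD_nonneg : ∀ g : X → Bool, 0 ≤ errD D g := fun g => ENNReal.toReal_nonneg
  -- qScore basic facts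
  have hq_le : ∀ (g f' : X → Bool), f' ∈ C →
      qScore C T W g ≤ disS (fun i => (T i).1) g f' + errS W f' := by
    intro g f' hf'
    have hb : BddBelow (Set.range fun f'' : C =>
        disS (fun i => (T i).1) g (f'' : X → Bool) + errS W (f'' : X → Bool)) := by
      refine ⟨0, ?_⟩
      rintro x ⟨f'', rfl⟩
      exact add_nonneg (hdisS_nonneg _ _) (herrS_nonneg _)
    exact ciInf_le hb ⟨f', hf'⟩
  have hq_nonneg : ∀ g : X → Bool, 0 ≤ qScore C T W g := fun g =>
    Real.iInf_nonneg fun f'' => add_nonneg (hdisS_nonneg _ _) (herrS_nonneg _)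
  -- optErr lower bounds errD on C
  have hopt_le : ∀ c ∈ C, optErr C D ≤ errD D c := by
    intro c hc
    have hb : BddBelow (Set.range fun c' : C => errD D (c' : X → Bool)) := by
      refine ⟨0, ?_⟩
      rintro x ⟨c', rfl⟩
      exact herrD_nonneg _
    exact ciInf_le hb ⟨c, hc⟩
  -- inf over H of qScore ≤ optErr + α/9
  have hinfH : (⨅ f' : H, qScore C T W (f' : X → Bool)) ≤ optErr C D + α / 9 := by
    have key : ∀ c : C, (⨅ f' : H, qScore C T W (f' : X → Bool)) - α / 9 ≤ errD D c := by
      intro ⟨c, hc⟩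
      obtain ⟨h', hh', hagree⟩ := hcover c hc
      have hdis0 : disS (fun i => (T i).1) h' c = 0 := by
        simp [disS, hagree]
      have hb : BddBelow (Set.range fun f'' : H => qScore C T W (f'' : X → Bool)) := by
        refine ⟨0, ?_⟩
        rintro x ⟨f'', rfl⟩
        exact hq_nonneg _
      have h1 : (⨅ f' : H, qScore C T W (f' : X → Bool)) ≤ qScore C T W h' :=
        ciInf_le hb ⟨h', hh'⟩
      have h2 : qScore C T W h' ≤ errS W c := by
        have := hq_le h' c hc
        rwa [hdis0, zero_add] at this
      have h3 : errS W c ≤ errD D c + α / 9 := by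
        have := (abs_le.mp (hE1 c hc)).1
        linarith
      linarith
    have := le_ciInf key
    have heq : (⨅ c : C, errD D (c : X → Bool)) = optErr C D := rfl
    rw [heq] at this
    linarith
  have hqh : qScore C T W h ≤ optErr C D + 2 * α / 9 := by linarith
  -- errS f ≥ optErr − α/9
  have hfD : optErr C D ≤ errD D f := hopt_le f hfC
  have hf1 := abs_le.mp (hE1 f hfC)
  have herrSf_lb : optErr C D - α / 9 ≤ errS W f := by
    have : errD D f - errS W f ≤ α / 9 := hf1.2
    linarith
  have hdis_le : disS (fun i => (T i).1) h f ≤ α / 3 := by linarith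
  have hdisD : disD (D.map Prod.fst) h f ≤ 2 * α / 3 :=
    hE3 h (hHC hh) f hfC hdis_le
  have herrDf : errD D f ≤ optErr C D + α / 3 := by
    have hdisS0 := hdisS_nonneg h f
    have : errS W f ≤ qScore C T W h := by linarith
    have : errD D f ≤ errS W f + α / 9 := by linarith [hf1.2]
    linarith
  -- triangle inequality: errD D h ≤ disD + errD D f
  have htri : errD D h ≤ disD (D.map Prod.fst) h f + errD D f := by
    haveI : IsProbabilityMeasure (D.map Prod.fst) :=
      MeasureTheory.Measure.isProbabilityMeasure_map measurable_fst.aemeasurable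
    have hsub : {p : X × Bool | h p.1 ≠ p.2} ⊆
        (Prod.fst ⁻¹' {x | h x ≠ f x}) ∪ {p : X × Bool | f p.1 ≠ p.2} := by
      intro p hp
      by_cases hpf : h p.1 = f p.1
      · right; simp only [Set.mem_setOf_eq] at hp ⊢; rw [← hpf]; exact hp
      · left; exact hpf
    have h1 : D {p : X × Bool | h p.1 ≠ p.2} ≤
        (D.map Prod.fst) {x | h x ≠ f x} + D {p : X × Bool | f p.1 ≠ p.2} := by
      calc D {p : X × Bool | h p.1 ≠ p.2}
          ≤ D ((Prod.fst ⁻¹' {x | h x ≠ f x}) ∪ {p : X × Bool | f p.1 ≠ p.2}) :=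
            measure_mono hsub
        _ ≤ D (Prod.fst ⁻¹' {x | h x ≠ f x}) + D {p : X × Bool | f p.1 ≠ p.2} :=
            measure_union_le _ _
        _ ≤ _ := add_le_add_left
            (Measure.le_map_apply measurable_fst.aemeasurable _) _
    unfold errD disD
    rw [← ENNReal.toReal_add (measure_ne_top _ _) (measure_ne_top _ _)]
    exact ENNReal.toReal_mono
      (ENNReal.add_ne_top.mpr ⟨measure_ne_top _ _, measure_ne_top _ _⟩) h1
  linarith
end
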